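/- arXiv:1907.01598 — 5 statements merged into one kernel-verified Lean document; each statement's English description precedes it below -/
import Mathlib

section
/- For every g > 0, every continuous u : ℝ → ℝ and every T > 0, there exist an initial angle φ ∈ (0, π) and a solution α of the pendulum equation with α(0) = φ and α'(0) = 0 such that α(t) ∈ (0, π) for all t ∈ [0, T]. (Whitney's problem: the rod can be placed at rest in a position from which it never touches the floor during the whole journey.) -/
open Set Function Real MeasureTheory intervalIntegral Topology Filter Interval

section PL
open Nat

variable {E : Type*} [NormedAddCommGroup E] [NormedSpace ℝ E] [CompleteSpace E]

theorem my_global_picard_lindelof {a b t₀ : ℝ} (hab : a ≤ b) (ht₀ : t₀ ∈ Set.Icc a b)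
    (F : ℝ → E → E) (hFc : Continuous (Function.uncurry F)) (K : NNReal)
    (hK : ∀ t, LipschitzWith K (F t)) (x₀ : E) :
    ∃ X : ℝ → E, X t₀ = x₀ ∧ ∀ t ∈ Set.Icc a b, HasDerivAt X (F t (X t)) t := by
  haveI : Nonempty (Icc a b) := ⟨⟨t₀, ht₀⟩⟩
  set proj : ℝ → Icc a b := projIcc a b hab with hproj
  have hproj_eq : ∀ s ∈ Icc a b, ((proj s : ℝ)) = s := by
    intro s hs
    rw [hproj, coe_projIcc, min_eq_right hs.2, max_eq_right hs.1]
  have contC : ∀ f : C(Icc a b, E), Continuous fun s : ℝ => F s (f (proj s)) := by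
    intro f
    exact hFc.comp (continuous_id.prodMk (f.continuous.comp continuous_projIcc))
  have intg : ∀ (f : C(Icc a b, E)) (t₁ t₂ : ℝ),
      IntervalIntegrable (fun s => F s (f (proj s))) volume t₁ t₂ :=
    fun f t₁ t₂ => (contC f).intervalIntegrable _ _
  set next : C(Icc a b, E) → C(Icc a b, E) := fun f =>
    ⟨fun t => x₀ + ∫ s in t₀..(t : ℝ), F s (f (proj s)),
      continuous_const.add
        ((intervalIntegral.continuous_primitive (intg f) t₀).comp continuous_subtype_val)⟩
    with hnext
  have key : ∀ n : ℕ, ∀ f g : C(Icc a b, E), ∀ t : Icc a b,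
      dist (next^[n] f t) (next^[n] g t) ≤ ((K : ℝ) * |(t : ℝ) - t₀|) ^ n / n ! * dist f g := by
    intro n
    induction n with
    | zero =>
      intro f g t
      simpa using ContinuousMap.dist_apply_le_dist (f := f) (g := g) t
    | succ n ih =>
      intro f g t
      rw [Function.iterate_succ_apply', Function.iterate_succ_apply']
      set f' := next^[n] f with hf'
      set g' := next^[n] g with hg'
      have hsub : ∀ s ∈ Ι t₀ (t : ℝ), ((proj s : ℝ)) = s := by
        intro s hs
        exact hproj_eq s (uIcc_subset_Icc ht₀ t.2 (Ioc_subset_Icc_self hs))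
      rw [show ((next f') t : E) = x₀ + ∫ s in t₀..(t : ℝ), F s (f' (proj s)) from rfl,
        show ((next g') t : E) = x₀ + ∫ s in t₀..(t : ℝ), F s (g' (proj s)) from rfl,
        dist_eq_norm, add_sub_add_left_eq_sub,
        ← intervalIntegral.integral_sub (intg f' t₀ t) (intg g' t₀ t),
        intervalIntegral.norm_integral_eq_norm_integral_uIoc]
      calc
        ‖∫ s in Ι t₀ (t : ℝ), (F s (f' (proj s)) - F s (g' (proj s)))‖ ≤
            ∫ s in Ι t₀ (t : ℝ), (K : ℝ) * (((K : ℝ) * |s - t₀|) ^ n / n ! * dist f g) := by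
          refine norm_integral_le_of_norm_le (Continuous.integrableOn_uIoc (by fun_prop)) ?_
          refine (ae_restrict_mem measurableSet_Ioc).mono fun s hs => ?_
          have h1 : dist (f' (proj s)) (g' (proj s)) ≤
              ((K : ℝ) * |s - t₀|) ^ n / n ! * dist f g := by
            have h2 := ih f g (proj s)
            rwa [hsub s hs] at h2
          calc
            ‖F s (f' (proj s)) - F s (g' (proj s))‖
                = dist (F s (f' (proj s))) (F s (g' (proj s))) := (dist_eq_norm _ _).symm
            _ ≤ (K : ℝ) * dist (f' (proj s)) (g' (proj s)) := (hK s).dist_le_mul _ _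
            _ ≤ (K : ℝ) * (((K : ℝ) * |s - t₀|) ^ n / n ! * dist f g) := by
                have : (0 : ℝ) ≤ (K : ℝ) := K.2
                exact mul_le_mul_of_nonneg_left h1 this
        _ = ((K : ℝ) * |(t : ℝ) - t₀|) ^ (n + 1) / (n + 1)! * dist f g := by
          simp_rw [mul_pow, div_eq_mul_inv, mul_assoc, MeasureTheory.integral_const_mul,
            MeasureTheory.integral_mul_const, integral_pow_abs_sub_uIoc, div_eq_mul_inv,
            pow_succ' (K : ℝ), Nat.factorial_succ, Nat.cast_mul, Nat.cast_succ, mul_inv, mul_assoc]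
  have dist_le : ∀ (n : ℕ) (f g : C(Icc a b, E)),
      dist (next^[n] f) (next^[n] g) ≤ ((K : ℝ) * (b - a)) ^ n / n ! * dist f g := by
    intro n f g
    refine ContinuousMap.dist_le_iff_of_nonempty.2 fun t => (key n f g t).trans ?_
    have h1 : |(t : ℝ) - t₀| ≤ b - a :=
      abs_sub_le_iff.2 ⟨by linarith [t.2.1, t.2.2, ht₀.1, ht₀.2],
        by linarith [t.2.1, t.2.2, ht₀.1, ht₀.2]⟩
    gcongr
  obtain ⟨N, hN⟩ := ((FloorSemiring.tendsto_pow_div_factorial_atTop ((K : ℝ) * (b - a))).eventually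
    (gt_mem_nhds zero_lt_one)).exists
  have hnn : (0 : ℝ) ≤ ((K : ℝ) * (b - a)) ^ N / N ! :=
    div_nonneg (pow_nonneg (mul_nonneg K.2 (sub_nonneg.2 hab)) _) (Nat.cast_nonneg _)
  have hcontr : ContractingWith ⟨_, hnn⟩ (next^[N]) :=
    ⟨hN, LipschitzWith.of_dist_le_mul fun f g => dist_le N f g⟩
  obtain ⟨f, hf⟩ : ∃ f, next f = f := ⟨_, hcontr.isFixedPt_fixedPoint_iterate⟩
  refine ⟨fun t => x₀ + ∫ s in t₀..t, F s (f (proj s)), by simp, fun t ht => ?_⟩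
  have hpt : ((proj t : ℝ)) = t := hproj_eq t ht
  have hXt : x₀ + (∫ s in t₀..t, F s (f (proj s))) = f (proj t) := by
    have h2 : (next f) (proj t) = f (proj t) := by rw [hf]
    rw [show ((next f) (proj t) : E) = x₀ + ∫ s in t₀..((proj t : ℝ)), F s (f (proj s)) from rfl,
      hpt] at h2
    exact h2
  have hd : HasDerivAt (fun t : ℝ => x₀ + ∫ s in t₀..t, F s (f (proj s)))
      (F t (f (proj t))) t := by
    refine HasDerivAt.const_add _ ?_
    exact intervalIntegral.integral_hasDerivAt_right (intg f t₀ t)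
      ((contC f).stronglyMeasurableAtFilter _ _) (contC f).continuousAt
  have heq : F t (x₀ + ∫ s in t₀..t, F s (f (proj s))) = F t (f (proj t)) := by rw [hXt]
  rw [heq]
  exact hd

theorem my_exists_global_solution (F : ℝ → E → E) (hFc : Continuous (Function.uncurry F))
    (hK : ∀ n : ℕ, ∃ K : NNReal, ∀ t ∈ Set.Icc (-(n : ℝ)) (n : ℝ), LipschitzWith K (F t))
    (x₀ : E) :
    ∃ X : ℝ → E, X 0 = x₀ ∧ ∀ t : ℝ, HasDerivAt X (F t (X t)) t := by
  -- solutions on the intervals [-(n+1), n+1]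
  have hsol : ∀ n : ℕ, ∃ X : ℝ → E, X 0 = x₀ ∧
      ∀ t ∈ Icc (-(n + 1 : ℝ)) (n + 1 : ℝ), HasDerivAt X (F t (X t)) t := by
    intro n
    have hab : (-(n + 1 : ℝ)) ≤ (n + 1 : ℝ) := by linarith [Nat.cast_nonneg (α := ℝ) n]
    obtain ⟨K, hKn⟩ := hK (n + 1)
    have hKn' : ∀ t ∈ Icc (-(n + 1 : ℝ)) (n + 1 : ℝ), LipschitzWith K (F t) := by
      intro t ht
      refine hKn t ?_
      push_cast
      exact ht
    set Ftr : ℝ → E → E := fun t => F ((projIcc (-(n + 1 : ℝ)) (n + 1 : ℝ) hab t : ℝ)) with hFtr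
    have hFtr_eq : ∀ t ∈ Icc (-(n + 1 : ℝ)) (n + 1 : ℝ), Ftr t = F t := by
      intro t ht
      rw [hFtr]
      simp only [coe_projIcc, min_eq_right ht.2, max_eq_right ht.1]
    have hFtrc : Continuous (Function.uncurry Ftr) := by
      have : Function.uncurry Ftr =
          (Function.uncurry F) ∘ fun q : ℝ × E =>
            (((projIcc (-(n + 1 : ℝ)) (n + 1 : ℝ) hab q.1 : ℝ)), q.2) := rfl
      rw [this]
      exact hFc.comp ((continuous_subtype_val.comp
        (continuous_projIcc.comp continuous_fst)).prodMk continuous_snd)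
    have h0 : (0 : ℝ) ∈ Icc (-(n + 1 : ℝ)) (n + 1 : ℝ) := by
      have := Nat.cast_nonneg (α := ℝ) n; constructor <;> linarith
    obtain ⟨X, hX0, hXd⟩ := my_global_picard_lindelof hab h0 Ftr hFtrc K
      (fun t => hKn' _ (projIcc _ _ hab t).2) x₀
    refine ⟨X, hX0, fun t ht => ?_⟩
    have := hXd t ht
    rwa [hFtr_eq t ht] at this
  choose Y hY0 hYd using hsol
  -- uniqueness on overlaps
  have huniq : ∀ m n : ℕ, m ≤ n → Set.EqOn (Y m) (Y n) (Ioo (-(m + 1 : ℝ)) (m + 1 : ℝ)) := by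
    intro m n hmn
    obtain ⟨K, hKm⟩ := hK (m + 1)
    have hKm' : ∀ t ∈ Icc (-(m + 1 : ℝ)) (m + 1 : ℝ), LipschitzWith K (F t) := by
      intro t ht
      refine hKm t ?_
      push_cast
      exact ht
    have hab : (-(m + 1 : ℝ)) ≤ (m + 1 : ℝ) := by linarith [Nat.cast_nonneg (α := ℝ) m]
    set Ftr : ℝ → E → E := fun t => F ((projIcc (-(m + 1 : ℝ)) (m + 1 : ℝ) hab t : ℝ)) with hFtr
    have hvL : ∀ t : ℝ, LipschitzOnWith K (Ftr t) Set.univ := fun t =>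
      (hKm' _ (projIcc _ _ hab t).2).lipschitzOnWith
    have hFtr_eq : ∀ t ∈ Icc (-(m + 1 : ℝ)) (m + 1 : ℝ), Ftr t = F t := by
      intro t ht
      rw [hFtr]
      simp only [coe_projIcc, min_eq_right ht.2, max_eq_right ht.1]
    have h0 : (0 : ℝ) ∈ Ioo (-(m + 1 : ℝ)) (m + 1 : ℝ) := by
      have := Nat.cast_nonneg (α := ℝ) m; constructor <;> linarith
    refine ODE_solution_unique_of_mem_Ioo (v := Ftr) (s := fun _ => Set.univ) (fun t _ => hvL t) h0
      (fun t ht => ⟨?_, trivial⟩) (fun t ht => ⟨?_, trivial⟩) (by rw [hY0 m, hY0 n])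
    · rw [hFtr_eq t (Ioo_subset_Icc_self ht)]
      exact hYd m t (Ioo_subset_Icc_self ht)
    · rw [hFtr_eq t (Ioo_subset_Icc_self ht)]
      refine hYd n t ?_
      have h1 : (m : ℝ) ≤ n := Nat.cast_le.2 hmn
      exact ⟨by linarith [ht.1.le], by linarith [ht.2.le]⟩
  have hmemIoo : ∀ t : ℝ, t ∈ Ioo (-((⌈|t|⌉₊ : ℝ) + 1)) ((⌈|t|⌉₊ : ℝ) + 1) := by
    intro t
    have h1 : |t| ≤ (⌈|t|⌉₊ : ℝ) := Nat.le_ceil _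
    rw [Set.mem_Ioo, ← abs_lt]
    linarith
  have hagree : ∀ (n : ℕ) (s : ℝ), s ∈ Ioo (-(n + 1 : ℝ)) (n + 1 : ℝ) →
      Y (⌈|s|⌉₊) s = Y n s := by
    intro n s hs
    rcases le_total (⌈|s|⌉₊) n with h | h
    · exact huniq _ n h (hmemIoo s)
    · exact (huniq n _ h hs).symm
  refine ⟨fun t => Y (⌈|t|⌉₊) t, by simpa using hY0 (⌈|(0 : ℝ)|⌉₊), fun t => ?_⟩
  set n := ⌈|t|⌉₊ with hn
  have hev : (fun s => Y (⌈|s|⌉₊) s) =ᶠ[nhds t] Y n := by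
    filter_upwards [isOpen_Ioo.mem_nhds (hmemIoo t)] with s hs
    exact hagree n s hs
  have hd : HasDerivAt (Y n) (F t (Y n t)) t := hYd n t (Ioo_subset_Icc_self (hmemIoo t))
  exact hd.congr_of_eventuallyEq hev

end PL

lemma my_abs_sin_sub_sin (x y : ℝ) : |Real.sin x - Real.sin y| ≤ |x - y| := by
  rw [Real.sin_sub_sin, abs_mul, abs_mul, abs_two]
  have h1 : |Real.sin ((x - y) / 2)| ≤ |(x - y) / 2| := Real.abs_sin_le_abs
  have h2 : |Real.cos ((x + y) / 2)| ≤ 1 := Real.abs_cos_le_one _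
  have h3 : |(x - y) / 2| = |x - y| / 2 := by rw [abs_div, abs_two]
  nlinarith [abs_nonneg (Real.sin ((x - y) / 2)), abs_nonneg (x - y),
    abs_nonneg (Real.cos ((x + y) / 2))]

lemma my_abs_cos_sub_cos (x y : ℝ) : |Real.cos x - Real.cos y| ≤ |x - y| := by
  rw [Real.cos_sub_cos, abs_mul, abs_mul, show |(-2 : ℝ)| = 2 by norm_num]
  have h1 : |Real.sin ((x - y) / 2)| ≤ |(x - y) / 2| := Real.abs_sin_le_abs
  have h2 : |Real.sin ((x + y) / 2)| ≤ 1 := Real.abs_sin_le_one _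
  have h3 : |(x - y) / 2| = |x - y| / 2 := by rw [abs_div, abs_two]
  nlinarith [abs_nonneg (Real.sin ((x - y) / 2)), abs_nonneg (x - y),
    abs_nonneg (Real.sin ((x + y) / 2))]

/-- If `f t₀ = c`, `f' t₀ ≤ 0` and `f'' t₀ < 0`, then `f` drops strictly below `c`
immediately after `t₀`. -/
lemma my_drops_below {f f' f'' : ℝ → ℝ} {t₀ c : ℝ}
    (hf : ∀ t, HasDerivAt f (f' t) t) (hf' : ∀ t, HasDerivAt f' (f'' t) t)
    (hfc : f t₀ = c) (h1 : f' t₀ ≤ 0) (h2 : f'' t₀ < 0) {δ : ℝ} (hδ : 0 < δ) :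
    ∃ t, t ∈ Set.Ioc t₀ (t₀ + δ) ∧ f t < c := by
  rcases lt_or_eq_of_le h1 with hneg | heq
  · have hs : Filter.Tendsto (slope f t₀) (nhdsWithin t₀ (Set.Ioi t₀)) (nhds (f' t₀)) :=
      (hasDerivAt_iff_tendsto_slope.1 (hf t₀)).mono_left
        (nhdsWithin_mono _ fun x hx => ne_of_gt hx)
    have hev : ∀ᶠ s in nhdsWithin t₀ (Set.Ioi t₀), slope f t₀ s < 0 :=
      hs.eventually_lt_const hneg
    have hIoo : Set.Ioo t₀ (t₀ + δ) ∈ nhdsWithin t₀ (Set.Ioi t₀) :=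
      Ioo_mem_nhdsGT_of_mem ⟨le_rfl, by linarith⟩
    obtain ⟨t, hslope, htmem⟩ := (hev.and (Filter.eventually_of_mem hIoo fun x hx => hx)).exists
    rw [slope_def_field] at hslope
    have h3 : 0 < t - t₀ := sub_pos.2 htmem.1
    have h4 := mul_neg_of_neg_of_pos hslope h3
    rw [div_mul_cancel₀ _ (ne_of_gt h3)] at h4
    exact ⟨t, ⟨htmem.1, htmem.2.le⟩, by linarith⟩
  · have hs : Filter.Tendsto (slope f' t₀) (nhdsWithin t₀ (Set.Ioi t₀)) (nhds (f'' t₀)) :=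
      (hasDerivAt_iff_tendsto_slope.1 (hf' t₀)).mono_left
        (nhdsWithin_mono _ fun x hx => ne_of_gt hx)
    have hev : ∀ᶠ s in nhdsWithin t₀ (Set.Ioi t₀), f' s < 0 := by
      filter_upwards [hs.eventually_lt_const h2, self_mem_nhdsWithin] with s h5 h6
      rw [slope_def_field] at h5
      have h7 : 0 < s - t₀ := sub_pos.2 h6
      have h8 := mul_neg_of_neg_of_pos h5 h7
      rw [div_mul_cancel₀ _ (ne_of_gt h7)] at h8
      linarith [heq]
    obtain ⟨b', hb', hsub⟩ := mem_nhdsGT_iff_exists_Ioc_subset.1 hev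
    set m := min b' (t₀ + δ) with hm
    have hlt : t₀ < m := lt_min hb' (by linarith)
    have hanti : StrictAntiOn f (Set.Icc t₀ m) := by
      refine strictAntiOn_of_deriv_neg (convex_Icc _ _)
        (fun s _ => (hf s).continuousAt.continuousWithinAt) fun s hs' => ?_
      rw [interior_Icc] at hs'
      rw [(hf s).deriv]
      exact hsub ⟨hs'.1, le_trans hs'.2.le (min_le_left _ _)⟩
    have := hanti ⟨le_rfl, hlt.le⟩ ⟨hlt.le, le_rfl⟩ hlt
    exact ⟨m, ⟨hlt, min_le_right _ _⟩, by linarith⟩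

/-- If `f t₀ = c`, `f' t₀ ≥ 0` and `f'' t₀ > 0`, then `f` rises strictly above `c`
immediately after `t₀`. -/
lemma my_rises_above {f f' f'' : ℝ → ℝ} {t₀ c : ℝ}
    (hf : ∀ t, HasDerivAt f (f' t) t) (hf' : ∀ t, HasDerivAt f' (f'' t) t)
    (hfc : f t₀ = c) (h1 : 0 ≤ f' t₀) (h2 : 0 < f'' t₀) {δ : ℝ} (hδ : 0 < δ) :
    ∃ t, t ∈ Set.Ioc t₀ (t₀ + δ) ∧ c < f t := by
  obtain ⟨t, ht, hlt⟩ := my_drops_below (f := fun s => -f s) (f' := fun s => -f' s)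
    (f'' := fun s => -f'' s) (c := -c) (fun t => (hf t).neg) (fun t => (hf' t).neg)
    (show -f t₀ = -c by rw [hfc]) (show -f' t₀ ≤ 0 by linarith)
    (show -f'' t₀ < 0 by linarith) hδ
  exact ⟨t, ht, by have : -f t < -c := hlt; linarith⟩
/-- The first-order vector field for the pendulum equation. -/
noncomputable def pendF (g : ℝ) (u : ℝ → ℝ) : ℝ → ℝ × ℝ → ℝ × ℝ :=
  fun t p => (p.2, -g * Real.cos p.1 + u t * Real.sin p.1)

lemma pendF_cont {g : ℝ} {u : ℝ → ℝ} (hu : Continuous u) :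
    Continuous (Function.uncurry (pendF g u)) := by
  apply Continuous.prodMk
  · exact continuous_snd.comp continuous_snd
  · exact (continuous_const.mul (Real.continuous_cos.comp
      (continuous_fst.comp continuous_snd))).add
      ((hu.comp continuous_fst).mul (Real.continuous_sin.comp
      (continuous_fst.comp continuous_snd)))

lemma pendF_lip {g : ℝ} {u : ℝ → ℝ} (hg : 0 ≤ g) {t M : ℝ} (hM : |u t| ≤ M) :
    LipschitzWith (Real.toNNReal (max 1 (g + M))) (pendF g u t) := by
  have hM0 : (0 : ℝ) ≤ M := le_trans (abs_nonneg _) hM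
  have hC : (Real.toNNReal (max 1 (g + M)) : ℝ) = max 1 (g + M) :=
    Real.coe_toNNReal _ (le_trans zero_le_one (le_max_left _ _))
  refine LipschitzWith.of_dist_le_mul fun p q => ?_
  rw [hC]
  have e1 : dist (pendF g u t p) (pendF g u t q) = max (dist p.2 q.2)
      (dist (-g * Real.cos p.1 + u t * Real.sin p.1)
        (-g * Real.cos q.1 + u t * Real.sin q.1)) := by
    rw [Prod.dist_eq]; rfl
  rw [e1]
  have h6 : (0 : ℝ) ≤ dist p q := dist_nonneg
  have h5 : |p.1 - q.1| ≤ dist p q := by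
    rw [← Real.dist_eq, Prod.dist_eq]; exact le_max_left _ _
  apply max_le
  · have h2 : dist p.2 q.2 ≤ dist p q := by rw [Prod.dist_eq]; exact le_max_right _ _
    nlinarith [le_max_left (1 : ℝ) (g + M)]
  · rw [Real.dist_eq]
    have e2 : -g * Real.cos p.1 + u t * Real.sin p.1 -
        (-g * Real.cos q.1 + u t * Real.sin q.1) =
        -g * (Real.cos p.1 - Real.cos q.1) + u t * (Real.sin p.1 - Real.sin q.1) := by ring
    rw [e2]
    have h7 := my_abs_cos_sub_cos p.1 q.1
    have h8 := my_abs_sin_sub_sin p.1 q.1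
    calc |(-g) * (Real.cos p.1 - Real.cos q.1) + u t * (Real.sin p.1 - Real.sin q.1)|
        ≤ |(-g) * (Real.cos p.1 - Real.cos q.1)| + |u t * (Real.sin p.1 - Real.sin q.1)| :=
          abs_add_le _ _
      _ = g * |Real.cos p.1 - Real.cos q.1| + |u t| * |Real.sin p.1 - Real.sin q.1| := by
          rw [abs_mul, abs_mul, abs_neg, abs_of_nonneg hg]
      _ ≤ g * |p.1 - q.1| + M * |p.1 - q.1| := by
          exact add_le_add (mul_le_mul_of_nonneg_left h7 hg)
            (mul_le_mul hM h8 (abs_nonneg _) hM0)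
      _ ≤ max 1 (g + M) * dist p q := by
          nlinarith [le_max_right (1 : ℝ) (g + M), abs_nonneg (p.1 - q.1)]

/-- `α` is a solution of the inverted-pendulum equation
`α'' t = -g * cos (α t) + u t * sin (α t)`: it is twice continuously
differentiable and satisfies the equation at every time `t`. -/
def IsPendulumSolution (g : ℝ) (u : ℝ → ℝ) (α : ℝ → ℝ) : Prop :=
  ContDiff ℝ 2 α ∧
    ∀ t : ℝ, deriv (deriv α) t = -g * Real.cos (α t) + u t * Real.sin (α t)

/-- Whitney's problem on a finite time interval: there is an initial angle
`φ ∈ (0, π)` from which the rod, released at rest, stays strictly above the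
floor during the whole journey `[0, T]`. -/
theorem whitney_finite_horizon (g : ℝ) (hg : 0 < g) (u : ℝ → ℝ) (hu : Continuous u)
    (T : ℝ) (hT : 0 < T) :
    ∃ φ ∈ Set.Ioo (0 : ℝ) Real.pi, ∃ α : ℝ → ℝ,
      IsPendulumSolution g u α ∧ α 0 = φ ∧ deriv α 0 = 0 ∧
        ∀ t ∈ Set.Icc (0 : ℝ) T, α t ∈ Set.Ioo (0 : ℝ) Real.pi := by
  have hg0 : (0:ℝ) ≤ g := hg.le
  set F := pendF g u with hF
  have hFc := pendF_cont (g := g) hu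
  have hKn : ∀ n : ℕ, ∃ K : NNReal, ∀ t ∈ Set.Icc (-(n : ℝ)) (n : ℝ),
      LipschitzWith K (F t) := by
    intro n
    obtain ⟨M, hM⟩ := (isCompact_Icc (a := -(n:ℝ)) (b := (n:ℝ))).exists_bound_of_continuousOn
      hu.continuousOn
    exact ⟨Real.toNNReal (max 1 (g + M)), fun t ht => pendF_lip hg0
      (by rw [← Real.norm_eq_abs]; exact hM t ht)⟩
  have hexist : ∀ φ : ℝ, ∃ X : ℝ → ℝ × ℝ, X 0 = (φ, 0) ∧
      ∀ t, HasDerivAt X (F t (X t)) t :=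
    fun φ => my_exists_global_solution F hFc hKn (φ, 0)
  choose sol hsol0 hsold using hexist
  have hθd : ∀ φ t, HasDerivAt (fun s => (sol φ s).1) ((sol φ t).2) t := fun φ t =>
    (hasFDerivAt_fst (𝕜 := ℝ) (p := sol φ t)).comp_hasDerivAt t (hsold φ t)
  have hvd : ∀ φ t, HasDerivAt (fun s => (sol φ s).2)
      (-g * Real.cos ((sol φ t).1) + u t * Real.sin ((sol φ t).1)) t := fun φ t =>
    (hasFDerivAt_snd (𝕜 := ℝ) (p := sol φ t)).comp_hasDerivAt t (hsold φ t)
  have hθcont : ∀ φ, Continuous fun t => (sol φ t).1 := fun φ =>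
    continuous_iff_continuousAt.2 fun t => (hθd φ t).continuousAt
  have hθ0 : ∀ φ, (sol φ 0).1 = φ := fun φ => by rw [hsol0 φ]
  have hv0 : ∀ φ, (sol φ 0).2 = 0 := fun φ => by rw [hsol0 φ]
  set T' : ℝ := T + 1 with hT'
  have hT'pos : 0 < T' := by linarith
  obtain ⟨M, hM⟩ := (isCompact_Icc (a := (0:ℝ)) (b := T')).exists_bound_of_continuousOn
    hu.continuousOn
  set KR : ℝ := max 1 (g + M) with hKR
  set K : NNReal := Real.toNNReal KR with hK
  have hKcoe : (K : ℝ) = KR := Real.coe_toNNReal _ (le_trans zero_le_one (le_max_left _ _))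
  have hKR0 : (0:ℝ) ≤ KR := le_trans zero_le_one (le_max_left _ _)
  have hKlip : ∀ t ∈ Set.Icc (0:ℝ) T', LipschitzWith K (F t) := fun t ht =>
    pendF_lip hg0 (by rw [← Real.norm_eq_abs]; exact hM t ht)
  -- continuous dependence on the initial angle
  have contdep : ∀ φ ψ : ℝ, ∀ t ∈ Set.Icc (0:ℝ) T',
      |(sol φ t).1 - (sol ψ t).1| ≤ |φ - ψ| * Real.exp (KR * T') := by
    intro φ ψ t ht
    have hab : (0:ℝ) ≤ T' := hT'pos.le
    set Ftr : ℝ → ℝ × ℝ → ℝ × ℝ := fun s => F ((Set.projIcc (0:ℝ) T' hab s : ℝ)) with hFtr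
    have hvL : ∀ s, LipschitzWith K (Ftr s) := fun s => hKlip _ (Set.projIcc _ _ hab s).2
    have hFtr_eq : ∀ s ∈ Set.Icc (0:ℝ) T', Ftr s = F s := by
      intro s hs
      rw [hFtr]
      simp only [Set.coe_projIcc, min_eq_right hs.2, max_eq_right hs.1]
    have hcd := dist_le_of_trajectories_ODE (v := Ftr) hvL
      (fun s _ => (hsold φ s).continuousAt.continuousWithinAt)
      (fun s hs => by
        rw [hFtr_eq s (Set.Ico_subset_Icc_self hs)]
        exact (hsold φ s).hasDerivWithinAt)
      (fun s _ => (hsold ψ s).continuousAt.continuousWithinAt)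
      (fun s hs => by
        rw [hFtr_eq s (Set.Ico_subset_Icc_self hs)]
        exact (hsold ψ s).hasDerivWithinAt)
      (le_refl (dist (sol φ 0) (sol ψ 0))) t ht
    have hd0 : dist (sol φ 0) (sol ψ 0) = |φ - ψ| := by
      rw [hsol0 φ, hsol0 ψ, Prod.dist_eq, dist_self, max_eq_left dist_nonneg, Real.dist_eq]
    have h1 : |(sol φ t).1 - (sol ψ t).1| ≤ dist (sol φ t) (sol ψ t) := by
      rw [← Real.dist_eq, Prod.dist_eq]; exact le_max_left _ _
    have h2 : Real.exp ((K : ℝ) * (t - 0)) ≤ Real.exp (KR * T') := by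
      rw [hKcoe]
      apply Real.exp_le_exp.2
      have h3 := ht.1; have h4 := ht.2
      nlinarith
    calc |(sol φ t).1 - (sol ψ t).1| ≤ dist (sol φ t) (sol ψ t) := h1
      _ ≤ dist (sol φ 0) (sol ψ 0) * Real.exp ((K:ℝ) * (t - 0)) := hcd
      _ ≤ |φ - ψ| * Real.exp (KR * T') := by
          rw [hd0]
          exact mul_le_mul_of_nonneg_left h2 (abs_nonneg _)
  set U : Set ℝ := {φ | ∃ t, t ∈ Set.Icc (0:ℝ) T' ∧ (sol φ t).1 < 0 ∧
    ∀ s ∈ Set.Icc (0:ℝ) t, (sol φ s).1 < Real.pi} with hU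
  set V : Set ℝ := {φ | ∃ t, t ∈ Set.Icc (0:ℝ) T' ∧ Real.pi < (sol φ t).1 ∧
    ∀ s ∈ Set.Icc (0:ℝ) t, 0 < (sol φ s).1} with hV
  have hexpPos : 0 < Real.exp (KR * T') := Real.exp_pos _
  have hUopen : IsOpen U := by
    rw [Metric.isOpen_iff]
    intro φ hφ
    obtain ⟨t, ht, htneg, hbelow⟩ := hφ
    obtain ⟨s₀, hs₀mem, hs₀max⟩ := (isCompact_Icc (a := (0:ℝ)) (b := t)).exists_isMaxOn
      ⟨0, le_rfl, ht.1⟩ ((hθcont φ).continuousOn)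
    have hM₀ : (sol φ s₀).1 < Real.pi := hbelow s₀ hs₀mem
    set ε : ℝ := min (Real.pi - (sol φ s₀).1) (-(sol φ t).1) with hε
    have hεpos : 0 < ε := lt_min (by linarith) (by linarith)
    refine ⟨ε / Real.exp (KR * T'), by positivity, fun ψ hψ => ?_⟩
    rw [Metric.mem_ball, Real.dist_eq] at hψ
    have hkey : ∀ s ∈ Set.Icc (0:ℝ) T', |(sol ψ s).1 - (sol φ s).1| < ε := by
      intro s hs
      calc |(sol ψ s).1 - (sol φ s).1| ≤ |ψ - φ| * Real.exp (KR * T') := contdep ψ φ s hs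
        _ < (ε / Real.exp (KR * T')) * Real.exp (KR * T') :=
            mul_lt_mul_of_pos_right hψ hexpPos
        _ = ε := div_mul_cancel₀ _ (ne_of_gt hexpPos)
    refine ⟨t, ht, ?_, ?_⟩
    · have h2 := abs_lt.1 (hkey t ht)
      have h3 : ε ≤ -(sol φ t).1 := min_le_right _ _
      linarith [h2.2]
    · intro s hs
      have hsT' : s ∈ Set.Icc (0:ℝ) T' := ⟨hs.1, le_trans hs.2 ht.2⟩
      have h1 := abs_lt.1 (hkey s hsT')
      have h2 : (sol φ s).1 ≤ (sol φ s₀).1 := hs₀max hs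
      have h3 : ε ≤ Real.pi - (sol φ s₀).1 := min_le_left _ _
      linarith [h1.2]
  have hVopen : IsOpen V := by
    rw [Metric.isOpen_iff]
    intro φ hφ
    obtain ⟨t, ht, htpos, habove⟩ := hφ
    obtain ⟨s₀, hs₀mem, hs₀min⟩ := (isCompact_Icc (a := (0:ℝ)) (b := t)).exists_isMinOn
      ⟨0, le_rfl, ht.1⟩ ((hθcont φ).continuousOn)
    have hM₀ : 0 < (sol φ s₀).1 := habove s₀ hs₀mem
    set ε : ℝ := min ((sol φ s₀).1) ((sol φ t).1 - Real.pi) with hε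
    have hεpos : 0 < ε := lt_min (by linarith) (by linarith)
    refine ⟨ε / Real.exp (KR * T'), by positivity, fun ψ hψ => ?_⟩
    rw [Metric.mem_ball, Real.dist_eq] at hψ
    have hkey : ∀ s ∈ Set.Icc (0:ℝ) T', |(sol ψ s).1 - (sol φ s).1| < ε := by
      intro s hs
      calc |(sol ψ s).1 - (sol φ s).1| ≤ |ψ - φ| * Real.exp (KR * T') := contdep ψ φ s hs
        _ < (ε / Real.exp (KR * T')) * Real.exp (KR * T') :=
            mul_lt_mul_of_pos_right hψ hexpPos
        _ = ε := div_mul_cancel₀ _ (ne_of_gt hexpPos)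
    refine ⟨t, ht, ?_, ?_⟩
    · have h1 := abs_lt.1 (hkey t ht)
      have h3 : ε ≤ (sol φ t).1 - Real.pi := min_le_right _ _
      linarith [h1.1]
    · intro s hs
      have hsT' : s ∈ Set.Icc (0:ℝ) T' := ⟨hs.1, le_trans hs.2 ht.2⟩
      have h1 := abs_lt.1 (hkey s hsT')
      have h2 : (sol φ s₀).1 ≤ (sol φ s).1 := hs₀min hs
      have h3 : ε ≤ (sol φ s₀).1 := min_le_left _ _
      linarith [h1.1]
  have h0U : (0:ℝ) ∈ U := by
    have hθ00 : (sol 0 0).1 = 0 := hθ0 0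
    have hcontAt : ∀ᶠ s in nhds (0:ℝ), (sol 0 s).1 < Real.pi := by
      apply ContinuousAt.eventually_lt (hθcont 0).continuousAt continuousAt_const
      show (sol 0 0).1 < Real.pi
      rw [hθ00]; exact Real.pi_pos
    obtain ⟨δ₀, hδ₀pos, hδ₀⟩ := Metric.eventually_nhds_iff.1 hcontAt
    have hδ : 0 < min (δ₀ / 2) 1 := lt_min (by linarith) one_pos
    obtain ⟨t, htIoc, htneg⟩ := my_drops_below (f := fun s => (sol 0 s).1)
      (f' := fun s => (sol 0 s).2)
      (f'' := fun s => -g * Real.cos ((sol 0 s).1) + u s * Real.sin ((sol 0 s).1))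
      (hθd 0) (hvd 0) hθ00 (le_of_eq (hv0 0))
      (by simp [hθ00]; try linarith) hδ
    refine ⟨t, ⟨htIoc.1.le, ?_⟩, htneg, ?_⟩
    · have h1 : min (δ₀ / 2) 1 ≤ 1 := min_le_right _ _
      have h2 := htIoc.2
      rw [hT']
      linarith
    · intro s hs
      apply hδ₀
      rw [Real.dist_eq, sub_zero, abs_of_nonneg hs.1]
      have h1 : min (δ₀ / 2) 1 ≤ δ₀ / 2 := min_le_left _ _
      have h2 := htIoc.2
      have h3 := hs.2
      linarith
  have hπV : Real.pi ∈ V := by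
    have hθπ0 : (sol Real.pi 0).1 = Real.pi := hθ0 _
    have hcontAt : ∀ᶠ s in nhds (0:ℝ), 0 < (sol Real.pi s).1 := by
      apply ContinuousAt.eventually_lt continuousAt_const (hθcont Real.pi).continuousAt
      show (0:ℝ) < (sol Real.pi 0).1
      rw [hθπ0]; exact Real.pi_pos
    obtain ⟨δ₀, hδ₀pos, hδ₀⟩ := Metric.eventually_nhds_iff.1 hcontAt
    have hδ : 0 < min (δ₀ / 2) 1 := lt_min (by linarith) one_pos
    obtain ⟨t, htIoc, htpos⟩ := my_rises_above (f := fun s => (sol Real.pi s).1)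
      (f' := fun s => (sol Real.pi s).2)
      (f'' := fun s => -g * Real.cos ((sol Real.pi s).1) + u s * Real.sin ((sol Real.pi s).1))
      (hθd _) (hvd _) hθπ0 (ge_of_eq (hv0 _))
      (by simp [hθπ0]; try linarith) hδ
    refine ⟨t, ⟨htIoc.1.le, ?_⟩, htpos, ?_⟩
    · have h1 : min (δ₀ / 2) 1 ≤ 1 := min_le_right _ _
      have h2 := htIoc.2
      rw [hT']
      linarith
    · intro s hs
      apply hδ₀
      rw [Real.dist_eq, sub_zero, abs_of_nonneg hs.1]
      have h1 : min (δ₀ / 2) 1 ≤ δ₀ / 2 := min_le_left _ _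
      have h2 := htIoc.2
      have h3 := hs.2
      linarith
  have hdisj : ∀ x : ℝ, x ∈ U → x ∈ V → False := by
    rintro x ⟨t₁, ht₁, h1, h2⟩ ⟨t₂, ht₂, h3, h4⟩
    rcases le_total t₁ t₂ with h | h
    · exact absurd h1 (not_lt.2 (le_of_lt (h4 t₁ ⟨ht₁.1, h⟩)))
    · exact absurd h3 (not_lt.2 (le_of_lt (h2 t₂ ⟨ht₂.1, h⟩)))
  have hcover : ¬ Set.Icc (0:ℝ) Real.pi ⊆ U ∪ V := by
    intro hsub
    obtain ⟨x, hx⟩ := isPreconnected_Icc U V hUopen hVopen hsub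
      ⟨0, ⟨le_rfl, Real.pi_pos.le⟩, h0U⟩ ⟨Real.pi, ⟨Real.pi_pos.le, le_rfl⟩, hπV⟩
    exact hdisj x hx.2.1 hx.2.2
  obtain ⟨φ, hφIcc, hφnot⟩ := Set.not_subset.1 hcover
  have hφU : φ ∉ U := fun h => hφnot (Or.inl h)
  have hφV : φ ∉ V := fun h => hφnot (Or.inr h)
  have hφ0 : φ ≠ 0 := by rintro rfl; exact hφU h0U
  have hφπ : φ ≠ Real.pi := by rintro rfl; exact hφV hπV
  have hφIoo : φ ∈ Set.Ioo (0:ℝ) Real.pi :=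
    ⟨lt_of_le_of_ne hφIcc.1 (Ne.symm hφ0), lt_of_le_of_ne hφIcc.2 hφπ⟩
  -- the chosen solution stays in (0, π) on [0, T]
  have hstay : ∀ t ∈ Set.Icc (0:ℝ) T, (sol φ t).1 ∈ Set.Ioo (0:ℝ) Real.pi := by
    by_contra hcon
    push_neg at hcon
    obtain ⟨tb, htb, htbad⟩ := hcon
    set Ebad : Set ℝ := Set.Icc (0:ℝ) T ∩
      ({t | (sol φ t).1 ≤ 0} ∪ {t | Real.pi ≤ (sol φ t).1}) with hEbad
    have hEne : Ebad.Nonempty := by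
      refine ⟨tb, htb, ?_⟩
      rw [Set.mem_Ioo, not_and_or, not_lt, not_lt] at htbad
      exact htbad.elim Or.inl Or.inr
    have hEclosed : IsClosed Ebad :=
      isClosed_Icc.inter ((isClosed_le (hθcont φ) continuous_const).union
        (isClosed_le continuous_const (hθcont φ)))
    have hEbdd : BddBelow Ebad := ⟨0, fun x hx => hx.1.1⟩
    set ts := sInf Ebad with hts
    have htsE : ts ∈ Ebad := hEclosed.csInf_mem hEne hEbdd
    have hts0 : 0 ≤ ts := htsE.1.1
    have htsT : ts ≤ T := htsE.1.2
    have hbefore : ∀ s, 0 ≤ s → s < ts → 0 < (sol φ s).1 ∧ (sol φ s).1 < Real.pi := by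
      intro s h0s hst
      by_contra hc
      rw [not_and_or, not_lt, not_lt] at hc
      have hsE : s ∈ Ebad := ⟨⟨h0s, le_trans hst.le htsT⟩, hc.elim Or.inl Or.inr⟩
      exact absurd (csInf_le hEbdd hsE) (not_le.2 hst)
    have htspos : 0 < ts := by
      rcases lt_or_eq_of_le hts0 with h | h
      · exact h
      · exfalso
        have h2 := htsE.2
        rw [← h] at h2
        rcases h2 with h2 | h2
        · rw [Set.mem_setOf_eq, hθ0 φ] at h2; linarith [hφIoo.1]
        · rw [Set.mem_setOf_eq, hθ0 φ] at h2; linarith [hφIoo.2]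
    have hlim : Filter.Tendsto (fun s => (sol φ s).1) (nhdsWithin ts (Set.Iio ts))
        (nhds ((sol φ ts).1)) := ((hθcont φ).continuousAt).continuousWithinAt
    have hIoo_mem : Set.Ioo 0 ts ∈ nhdsWithin ts (Set.Iio ts) :=
      Ioo_mem_nhdsLT_of_mem ⟨htspos, le_rfl⟩
    have hθts_nonneg : 0 ≤ (sol φ ts).1 :=
      ge_of_tendsto hlim (Filter.eventually_of_mem hIoo_mem fun s hs =>
        (hbefore s hs.1.le hs.2).1.le)
    have hθts_le : (sol φ ts).1 ≤ Real.pi :=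
      le_of_tendsto hlim (Filter.eventually_of_mem hIoo_mem fun s hs =>
        (hbefore s hs.1.le hs.2).2.le)
    rcases htsE.2 with hcase | hcase
    · -- exits through the floor at angle 0 : φ ∈ U, contradiction
      have hθts : (sol φ ts).1 = 0 := le_antisymm hcase hθts_nonneg
      have hvts : (sol φ ts).2 ≤ 0 := by
        have hsl := (hasDerivAt_iff_tendsto_slope.1 (hθd φ ts)).mono_left
          (nhdsWithin_mono _ fun x (hx : x ∈ Set.Iio ts) => ne_of_lt hx)
        refine le_of_tendsto hsl (Filter.eventually_of_mem hIoo_mem fun s hs' => ?_)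
        rw [slope_def_field, hθts]
        have h1 : 0 < (sol φ s).1 := (hbefore s hs'.1.le hs'.2).1
        have h2 : s - ts < 0 := sub_neg.2 hs'.2
        exact le_of_lt (div_neg_of_pos_of_neg (by linarith) h2)
      have hcontAt : ∀ᶠ s in nhds ts, (sol φ s).1 < Real.pi := by
        apply ContinuousAt.eventually_lt (hθcont φ).continuousAt continuousAt_const
        show (sol φ ts).1 < Real.pi
        rw [hθts]; exact Real.pi_pos
      obtain ⟨δ₀, hδ₀pos, hδ₀⟩ := Metric.eventually_nhds_iff.1 hcontAt
      have hδ : 0 < min (δ₀ / 2) 1 := lt_min (by linarith) one_pos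
      obtain ⟨t, htIoc, htneg⟩ := my_drops_below (f := fun s => (sol φ s).1)
        (f' := fun s => (sol φ s).2)
        (f'' := fun s => -g * Real.cos ((sol φ s).1) + u s * Real.sin ((sol φ s).1))
        (hθd φ) (hvd φ) hθts hvts
        (by simp [hθts]; try linarith) hδ
      apply hφU
      refine ⟨t, ⟨le_trans hts0 htIoc.1.le, ?_⟩, htneg, ?_⟩
      · have h1 : min (δ₀ / 2) 1 ≤ 1 := min_le_right _ _
        have h2 := htIoc.2
        rw [hT']
        linarith
      · intro s hs
        rcases lt_or_ge s ts with h | h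
        · exact (hbefore s hs.1 h).2
        · apply hδ₀
          rw [Real.dist_eq, abs_of_nonneg (by linarith : (0:ℝ) ≤ s - ts)]
          have h1 : min (δ₀ / 2) 1 ≤ δ₀ / 2 := min_le_left _ _
          have h2 := htIoc.2
          have h3 := hs.2
          linarith
    · -- exits through the floor at angle π : φ ∈ V, contradiction
      have hθts : (sol φ ts).1 = Real.pi := le_antisymm hθts_le hcase
      have hvts : 0 ≤ (sol φ ts).2 := by
        have hsl := (hasDerivAt_iff_tendsto_slope.1 (hθd φ ts)).mono_left
          (nhdsWithin_mono _ fun x (hx : x ∈ Set.Iio ts) => ne_of_lt hx)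
        refine ge_of_tendsto hsl (Filter.eventually_of_mem hIoo_mem fun s hs' => ?_)
        rw [slope_def_field, hθts]
        have h1 : (sol φ s).1 < Real.pi := (hbefore s hs'.1.le hs'.2).2
        have h2 : s - ts < 0 := sub_neg.2 hs'.2
        exact le_of_lt (div_pos_of_neg_of_neg (by linarith) h2)
      have hcontAt : ∀ᶠ s in nhds ts, 0 < (sol φ s).1 := by
        apply ContinuousAt.eventually_lt continuousAt_const (hθcont φ).continuousAt
        show (0:ℝ) < (sol φ ts).1
        rw [hθts]; exact Real.pi_pos
      obtain ⟨δ₀, hδ₀pos, hδ₀⟩ := Metric.eventually_nhds_iff.1 hcontAt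
      have hδ : 0 < min (δ₀ / 2) 1 := lt_min (by linarith) one_pos
      obtain ⟨t, htIoc, htpos⟩ := my_rises_above (f := fun s => (sol φ s).1)
        (f' := fun s => (sol φ s).2)
        (f'' := fun s => -g * Real.cos ((sol φ s).1) + u s * Real.sin ((sol φ s).1))
        (hθd φ) (hvd φ) hθts hvts
        (by simp [hθts]; try linarith) hδ
      apply hφV
      refine ⟨t, ⟨le_trans hts0 htIoc.1.le, ?_⟩, htpos, ?_⟩
      · have h1 : min (δ₀ / 2) 1 ≤ 1 := min_le_right _ _
        have h2 := htIoc.2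
        rw [hT']
        linarith
      · intro s hs
        rcases lt_or_ge s ts with h | h
        · exact (hbefore s hs.1 h).1
        · apply hδ₀
          rw [Real.dist_eq, abs_of_nonneg (by linarith : (0:ℝ) ≤ s - ts)]
          have h1 : min (δ₀ / 2) 1 ≤ δ₀ / 2 := min_le_left _ _
          have h2 := htIoc.2
          have h3 := hs.2
          linarith
  -- assemble
  set α : ℝ → ℝ := fun t => (sol φ t).1 with hα
  have hαd : ∀ t, HasDerivAt α ((sol φ t).2) t := hθd φ
  have hderiv : deriv α = fun t => (sol φ t).2 := funext fun t => (hαd t).deriv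
  have hβd : ∀ t, HasDerivAt (deriv α)
      (-g * Real.cos (α t) + u t * Real.sin (α t)) t := by
    intro t
    rw [hderiv]
    exact hvd φ t
  have hderiv2 : deriv (deriv α) = fun t => -g * Real.cos (α t) + u t * Real.sin (α t) :=
    funext fun t => (hβd t).deriv
  have hαcont : Continuous α := hθcont φ
  refine ⟨φ, hφIoo, α, ⟨?_, ?_⟩, hθ0 φ, ?_, hstay⟩
  · have h2 : (2 : WithTop ℕ∞) = 1 + 1 := by norm_num
    rw [h2, contDiff_succ_iff_deriv]
    refine ⟨fun t => (hαd t).differentiableAt, by simp, ?_⟩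
    rw [contDiff_one_iff_deriv]
    refine ⟨fun t => (hβd t).differentiableAt, ?_⟩
    rw [hderiv2]
    exact (continuous_const.mul (Real.continuous_cos.comp hαcont)).add
      (hu.mul (Real.continuous_sin.comp hαcont))
  · intro t
    rw [hderiv2]
  · rw [hderiv]
    exact hv0 φ
end

section
/- For every g > 0 and every continuous u : ℝ → ℝ, there exist an initial angle φ ∈ (0, π) and a solution α of the pendulum equation with α(0) = φ and α'(0) = 0 such that α(t) ∈ (0, π) for all t ≥ 0. (Infinite-horizon version of Whitney's problem: the rod never touches the floor for all future time.) -/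
open Set Real
open scoped NNReal

section aux
variable {E : Type*} [NormedAddCommGroup E] [NormedSpace ℝ E] [CompleteSpace E]

lemma hasDerivWithinAt_singleton' (f : ℝ → E) (x : ℝ) (d : E) :
    HasDerivWithinAt f d {x} x := by
  rw [hasDerivWithinAt_iff_tendsto_slope]
  simp [Filter.tendsto_bot]

/-- Glue two solutions of an ODE at a junction point. -/
lemma glue_solutions (v : ℝ → E → E) {f g : ℝ → E} {a b c : ℝ}
    (hab : a ≤ b) (hbc : b ≤ c) (hfg : f b = g b)
    (hf : ∀ t ∈ Icc a b, HasDerivWithinAt f (v t (f t)) (Icc a b) t)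
    (hg : ∀ t ∈ Icc b c, HasDerivWithinAt g (v t (g t)) (Icc b c) t) :
    ∃ h : ℝ → E, (∀ t, t ≤ b → h t = f t) ∧ (∀ t, b ≤ t → h t = g t) ∧
      ∀ t ∈ Icc a c, HasDerivWithinAt h (v t (h t)) (Icc a c) t := by
  classical
  refine ⟨fun t => if t ≤ b then f t else g t, fun t ht => if_pos ht, ?_, ?_⟩
  · intro t ht
    by_cases h' : t ≤ b
    · have : t = b := le_antisymm h' ht
      simp [h', this, hfg]
    · simp [h']
  set h : ℝ → E := fun t => if t ≤ b then f t else g t with hh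
  have hEf : ∀ s, s ≤ b → h s = f s := fun s hs => if_pos hs
  have hEg : ∀ s, b ≤ s → h s = g s := by
    intro s hs
    by_cases h' : s ≤ b
    · have : s = b := le_antisymm h' hs
      simp [h, this, hfg]
    · simp [h, h']
  have key1 : ∀ t ∈ Icc a b, HasDerivWithinAt h (v t (h t)) (Icc a b) t := by
    intro t ht
    rw [hEf t ht.2]
    exact (hf t ht).congr_of_mem (fun s hs => hEf s hs.2) ht
  have key2 : ∀ t ∈ Icc b c, HasDerivWithinAt h (v t (h t)) (Icc b c) t := by
    intro t ht
    rw [hEg t ht.1]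
    exact (hg t ht).congr_of_mem (fun s hs => hEg s hs.1) ht
  intro t ht
  rcases lt_trichotomy t b with h' | h' | h'
  · have h1 := key1 t ⟨ht.1, h'.le⟩
    have : Icc a b ∈ nhdsWithin t (Icc a c) := by
      filter_upwards [inter_mem_nhdsWithin (Icc a c) (Iio_mem_nhds h')] with s hs
      exact ⟨hs.1.1, hs.2.le⟩
    exact h1.mono_of_mem_nhdsWithin this
  · subst h'
    have := (key1 t ⟨ht.1, le_refl t⟩).union (key2 t ⟨le_refl t, ht.2⟩)
    rwa [Icc_union_Icc_eq_Icc ht.1 ht.2] at this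
  · have h1 := key2 t ⟨h'.le, ht.2⟩
    have : Icc b c ∈ nhdsWithin t (Icc a c) := by
      filter_upwards [inter_mem_nhdsWithin (Icc a c) (Ioi_mem_nhds h')] with s hs
      exact ⟨hs.2.le, hs.1.2⟩
    exact h1.mono_of_mem_nhdsWithin this


/-- One Picard–Lindelöf step of length 1/2, forward. -/
lemma pl_step_right (v : ℝ → E → E) (K : ℝ≥0) (A : ℝ) (hA : 0 ≤ A) (c : ℝ) (x₀ : E)
    (hK : ∀ t ∈ Icc c (c + 1/2), LipschitzWith K (v t))
    (hB : ∀ t ∈ Icc c (c + 1/2), ∀ x, ‖v t x‖ ≤ A + ‖x‖)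
    (hcont : ∀ x, ContinuousOn (fun t => v t x) (Icc c (c + 1/2))) :
    ∃ f : ℝ → E, f c = x₀ ∧
      ∀ t ∈ Icc c (c + 1/2), HasDerivWithinAt f (v t (f t)) (Icc c (c + 1/2)) t := by
  set R : ℝ := A + ‖x₀‖ with hR
  have hR0 : 0 ≤ R := by positivity
  have hpl : IsPicardLindelof v (tmin := c) (tmax := c + 1/2) ⟨c, le_refl c, by linarith⟩ x₀
      R.toNNReal 0 (2 * R.toNNReal) K :=
    { lipschitzOnWith := fun t ht => (hK t ht).lipschitzOnWith
      continuousOn := fun x _ => hcont x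
      norm_le := fun t ht x hx => by
        have h1 : ‖x‖ ≤ ‖x₀‖ + R := by
          have : ‖x - x₀‖ ≤ R := by
            have := mem_closedBall_iff_norm.mp hx; rwa [Real.coe_toNNReal _ hR0] at this
          calc ‖x‖ ≤ ‖x₀‖ + ‖x - x₀‖ := by
                have := norm_add_le x₀ (x - x₀); simpa using this
          _ ≤ ‖x₀‖ + R := by linarith
        simp only [NNReal.coe_mul, Real.coe_toNNReal _ hR0, NNReal.coe_ofNat]
        calc ‖v t x‖ ≤ A + ‖x‖ := hB t ht x
        _ ≤ A + (‖x₀‖ + R) := by linarith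
        _ = 2 * R := by rw [hR]; ring
      mul_max_le := by
        simp only [NNReal.coe_mul, Real.coe_toNNReal _ hR0, NNReal.coe_ofNat, NNReal.coe_zero, sub_zero]
        rw [show c + 1/2 - c = 1/2 by ring, sub_self, max_eq_left (by norm_num)]
        linarith }
  exact hpl.exists_eq_forall_mem_Icc_hasDerivWithinAt₀

/-- One Picard–Lindelöf step of length 1/2, backward. -/
lemma pl_step_left (v : ℝ → E → E) (K : ℝ≥0) (A : ℝ) (hA : 0 ≤ A) (c : ℝ) (x₀ : E)
    (hK : ∀ t ∈ Icc (c - 1/2) c, LipschitzWith K (v t))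
    (hB : ∀ t ∈ Icc (c - 1/2) c, ∀ x, ‖v t x‖ ≤ A + ‖x‖)
    (hcont : ∀ x, ContinuousOn (fun t => v t x) (Icc (c - 1/2) c)) :
    ∃ f : ℝ → E, f c = x₀ ∧
      ∀ t ∈ Icc (c - 1/2) c, HasDerivWithinAt f (v t (f t)) (Icc (c - 1/2) c) t := by
  set R : ℝ := A + ‖x₀‖ with hR
  have hR0 : 0 ≤ R := by positivity
  have hpl : IsPicardLindelof v (tmin := c - 1/2) (tmax := c) ⟨c, by linarith, le_refl c⟩ x₀
      R.toNNReal 0 (2 * R.toNNReal) K :=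
    { lipschitzOnWith := fun t ht => (hK t ht).lipschitzOnWith
      continuousOn := fun x _ => hcont x
      norm_le := fun t ht x hx => by
        have h1 : ‖x‖ ≤ ‖x₀‖ + R := by
          have : ‖x - x₀‖ ≤ R := by
            have := mem_closedBall_iff_norm.mp hx; rwa [Real.coe_toNNReal _ hR0] at this
          calc ‖x‖ ≤ ‖x₀‖ + ‖x - x₀‖ := by
                have := norm_add_le x₀ (x - x₀); simpa using this
          _ ≤ ‖x₀‖ + R := by linarith
        simp only [NNReal.coe_mul, Real.coe_toNNReal _ hR0, NNReal.coe_ofNat]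
        calc ‖v t x‖ ≤ A + ‖x‖ := hB t ht x
        _ ≤ A + (‖x₀‖ + R) := by linarith
        _ = 2 * R := by rw [hR]; ring
      mul_max_le := by
        simp only [NNReal.coe_mul, Real.coe_toNNReal _ hR0, NNReal.coe_ofNat, NNReal.coe_zero, sub_zero]
        rw [sub_self, show c - (c - 1/2) = 1/2 by ring, max_eq_right (by norm_num)]
        linarith }
  exact hpl.exists_eq_forall_mem_Icc_hasDerivWithinAt₀



lemma exists_sol_Icc_right (v : ℝ → E → E) (K : ℝ≥0) (A : ℝ) (hA : 0 ≤ A) :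
    ∀ (n : ℕ) (a : ℝ) (x₀ : E),
    (∀ t ∈ Icc a (a + n / 2), LipschitzWith K (v t)) →
    (∀ t ∈ Icc a (a + n / 2), ∀ x, ‖v t x‖ ≤ A + ‖x‖) →
    (∀ x, ContinuousOn (fun t => v t x) (Icc a (a + n / 2))) →
    ∃ x : ℝ → E, x a = x₀ ∧
      ∀ t ∈ Icc a (a + n / 2), HasDerivWithinAt x (v t (x t)) (Icc a (a + n / 2)) t := by
  intro n
  induction n with
  | zero =>
    intro a x₀ _ _ _
    refine ⟨fun _ => x₀, rfl, ?_⟩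
    simp only [Nat.cast_zero, zero_div, add_zero, Icc_self, mem_singleton_iff]
    rintro t rfl
    exact hasDerivWithinAt_singleton' _ _ _
  | succ n ih =>
    intro a x₀ hK hB hcont
    have hc : ((n : ℝ) + 1) / 2 = (n : ℝ) / 2 + 1 / 2 := by ring
    set c : ℝ := a + n / 2 with hcdef
    have hsub : Icc a c ⊆ Icc a (a + (n + 1 : ℕ) / 2) := by
      apply Icc_subset_Icc_right
      push_cast
      linarith
    have hsub2 : Icc c (c + 1/2) ⊆ Icc a (a + (n + 1 : ℕ) / 2) := by
      apply Icc_subset_Icc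
      · simp only [hcdef, le_add_iff_nonneg_right]
        positivity
      · push_cast; linarith [hc]
    obtain ⟨x₁, hx₁0, hx₁⟩ := ih a x₀ (fun t ht => hK t (hsub ht))
      (fun t ht => hB t (hsub ht)) (fun x => (hcont x).mono hsub)
    obtain ⟨f, hf0, hf⟩ := pl_step_right v K A hA c (x₁ c)
      (fun t ht => hK t (hsub2 ht)) (fun t ht => hB t (hsub2 ht))
      (fun x => (hcont x).mono hsub2)
    have hac : a ≤ c := by simp only [hcdef, le_add_iff_nonneg_right]; positivity
    obtain ⟨h, hhf, hhg, hsol⟩ := glue_solutions v hac (by linarith : c ≤ c + 1/2)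
      hf0.symm hx₁ hf
    refine ⟨h, by rw [hhf a hac, hx₁0], ?_⟩
    have : a + ((n:ℕ)+1 : ℕ) / 2 = c + 1/2 := by push_cast; simp [hcdef]; ring
    rw [this]
    exact hsol

lemma exists_sol_Icc_left (v : ℝ → E → E) (K : ℝ≥0) (A : ℝ) (hA : 0 ≤ A) :
    ∀ (n : ℕ) (a : ℝ) (x₀ : E),
    (∀ t ∈ Icc (a - n / 2) a, LipschitzWith K (v t)) →
    (∀ t ∈ Icc (a - n / 2) a, ∀ x, ‖v t x‖ ≤ A + ‖x‖) →
    (∀ x, ContinuousOn (fun t => v t x) (Icc (a - n / 2) a)) →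
    ∃ x : ℝ → E, x a = x₀ ∧
      ∀ t ∈ Icc (a - n / 2) a, HasDerivWithinAt x (v t (x t)) (Icc (a - n / 2) a) t := by
  intro n
  induction n with
  | zero =>
    intro a x₀ _ _ _
    refine ⟨fun _ => x₀, rfl, ?_⟩
    simp only [Nat.cast_zero, zero_div, sub_zero, Icc_self, mem_singleton_iff]
    rintro t rfl
    exact hasDerivWithinAt_singleton' _ _ _
  | succ n ih =>
    intro a x₀ hK hB hcont
    set c : ℝ := a - n / 2 with hcdef
    have hsub : Icc c a ⊆ Icc (a - (n + 1 : ℕ) / 2) a := by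
      apply Icc_subset_Icc_left
      push_cast
      linarith
    have hsub2 : Icc (c - 1/2) c ⊆ Icc (a - (n + 1 : ℕ) / 2) a := by
      apply Icc_subset_Icc
      · push_cast; simp only [hcdef]; ring_nf; exact le_refl _
      · simp only [hcdef, sub_le_self_iff]; positivity
    obtain ⟨x₁, hx₁0, hx₁⟩ := ih a x₀ (fun t ht => hK t (hsub ht))
      (fun t ht => hB t (hsub ht)) (fun x => (hcont x).mono hsub)
    obtain ⟨f, hf0, hf⟩ := pl_step_left v K A hA c (x₁ c)
      (fun t ht => hK t (hsub2 ht)) (fun t ht => hB t (hsub2 ht))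
      (fun x => (hcont x).mono hsub2)
    have hac : c ≤ a := by simp only [hcdef, sub_le_self_iff]; positivity
    obtain ⟨h, hhf, hhg, hsol⟩ := glue_solutions v (by linarith : c - 1/2 ≤ c) hac
      hf0 hf hx₁
    refine ⟨h, by rw [hhg a hac, hx₁0], ?_⟩
    have : a - ((n:ℕ)+1 : ℕ) / 2 = c - 1/2 := by push_cast; simp only [hcdef]; ring
    rw [this]
    exact hsol

/-- Solution on `Icc (-(n+1)) (n+1)` with given value at `0`. -/
lemma exists_sol_symm_Icc (v : ℝ → E → E) (n : ℕ) (K : ℝ≥0) (A : ℝ) (hA : 0 ≤ A)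
    (hK : ∀ t ∈ Icc (-(n+1) : ℝ) (n+1), LipschitzWith K (v t))
    (hB : ∀ t ∈ Icc (-(n+1) : ℝ) (n+1), ∀ x, ‖v t x‖ ≤ A + ‖x‖)
    (hcont : ∀ x, Continuous (fun t => v t x)) (x₀ : E) :
    ∃ x : ℝ → E, x 0 = x₀ ∧
      ∀ t ∈ Icc (-(n+1) : ℝ) (n+1), HasDerivWithinAt x (v t (x t)) (Icc (-(n+1) : ℝ) (n+1)) t := by
  have hcast : ((2 * (n + 1) : ℕ) : ℝ) / 2 = (n : ℝ) + 1 := by push_cast; ring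
  have hIr : Icc (0:ℝ) ((2*(n+1) : ℕ) / 2 : ℝ) ⊆ Icc (-(n+1) : ℝ) (n+1) := by
    rw [hcast]; apply Icc_subset_Icc_left; have : (0:ℝ) ≤ (n:ℝ) := Nat.cast_nonneg n; linarith
  have hIl : Icc (-((2*(n+1) : ℕ) / 2 : ℝ)) 0 ⊆ Icc (-(n+1) : ℝ) (n+1) := by
    rw [hcast]; apply Icc_subset_Icc_right; positivity
  have h0r : Icc (0:ℝ) (0 + ((2*(n+1):ℕ):ℝ)/2) = Icc (0:ℝ) (((2*(n+1):ℕ):ℝ)/2) := by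
    rw [zero_add]
  obtain ⟨f, hf0, hfd⟩ := exists_sol_Icc_right v K A hA (2*(n+1)) 0 x₀
    (by rw [h0r]; exact fun t ht => hK t (hIr ht))
    (by rw [h0r]; exact fun t ht => hB t (hIr ht))
    (fun x => ((hcont x).continuousOn))
  obtain ⟨g, hg0, hgd⟩ := exists_sol_Icc_left v K A hA (2*(n+1)) 0 x₀
    (by rw [zero_sub]; exact fun t ht => hK t (hIl ht))
    (by rw [zero_sub]; exact fun t ht => hB t (hIl ht))
    (fun x => ((hcont x).continuousOn))
  rw [zero_sub] at hgd
  rw [zero_add] at hfd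
  have hnn : (0:ℝ) ≤ (n:ℝ) := Nat.cast_nonneg n
  have hgle : (-(((2*(n+1):ℕ):ℝ)/2)) ≤ 0 := by rw [hcast]; linarith
  have hfle : (0:ℝ) ≤ ((2*(n+1):ℕ):ℝ)/2 := by rw [hcast]; linarith
  obtain ⟨h, hh1, hh2, hsol⟩ := glue_solutions v hgle hfle (hg0.trans hf0.symm) hgd hfd
  refine ⟨h, by rw [hh1 0 le_rfl, hg0], ?_⟩
  rw [show Icc (-(n+1):ℝ) (n+1) = Icc (-(((2*(n+1):ℕ):ℝ)/2)) (((2*(n+1):ℕ):ℝ)/2) by rw [hcast]]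
  exact hsol

/-- Global-in-time existence. -/
lemma exists_sol_global (v : ℝ → E → E)
    (hloc : ∀ n : ℕ, ∃ K : ℝ≥0, ∃ A : ℝ, 0 ≤ A ∧
      (∀ t ∈ Icc (-(n+1) : ℝ) (n+1), LipschitzWith K (v t)) ∧
      (∀ t ∈ Icc (-(n+1) : ℝ) (n+1), ∀ x, ‖v t x‖ ≤ A + ‖x‖))
    (hcont : ∀ x, Continuous (fun t => v t x)) (x₀ : E) :
    ∃ x : ℝ → E, x 0 = x₀ ∧ ∀ t, HasDerivAt x (v t (x t)) t := by
  have hX : ∀ n : ℕ, ∃ x : ℝ → E, x 0 = x₀ ∧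
      ∀ t ∈ Icc (-(n+1) : ℝ) (n+1), HasDerivWithinAt x (v t (x t)) (Icc (-(n+1) : ℝ) (n+1)) t := by
    intro n
    obtain ⟨K, A, hA, hK, hB⟩ := hloc n
    exact exists_sol_symm_Icc v n K A hA hK hB hcont x₀
  choose X hX0 hXd using hX
  -- Each X n is a genuine solution at interior points
  have hXd' : ∀ n : ℕ, ∀ t ∈ Ioo (-(n+1) : ℝ) (n+1), HasDerivAt (X n) (v t (X n t)) t := by
    intro n t ht
    exact (hXd n t (Ioo_subset_Icc_self ht)).hasDerivAt (Icc_mem_nhds ht.1 ht.2)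
  -- uniqueness: X m = X n on the smaller interval
  have huniq : ∀ m n : ℕ, m ≤ n → EqOn (X m) (X n) (Icc (-(m+1) : ℝ) (m+1)) := by
    intro m n hmn
    obtain ⟨K, A, hA, hK, hB⟩ := hloc n
    set w : ℝ → E → E := fun t => v (max (-(m+1) : ℝ) (min ((m:ℝ)+1) t)) with hw
    have hproj : ∀ t ∈ Icc (-(m+1) : ℝ) (m+1), max (-(m+1) : ℝ) (min ((m:ℝ)+1) t) = t := by
      intro t ht
      rw [min_eq_right ht.2, max_eq_right ht.1]
    have hmem : ∀ t : ℝ, max (-(m+1) : ℝ) (min ((m:ℝ)+1) t) ∈ Icc (-(n+1) : ℝ) (n+1) := by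
      intro t
      constructor
      · have hmn' : (m:ℝ) ≤ (n:ℝ) := by exact_mod_cast hmn
        have h1 : (-(n+1) : ℝ) ≤ -(m+1) := by linarith
        exact le_trans h1 (le_max_left _ _)
      · have hmn' : (m:ℝ) ≤ (n:ℝ) := by exact_mod_cast hmn
        have hm0 : (0:ℝ) ≤ (m:ℝ) := Nat.cast_nonneg m
        apply max_le
        · linarith
        · exact le_trans (min_le_left _ _) (by linarith)
    have hv : ∀ t, LipschitzOnWith K (w t) univ := fun t => (hK _ (hmem t)).lipschitzOnWith
    have hm0 : (0:ℝ) ≤ (m:ℝ) := Nat.cast_nonneg m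
    have hmn' : (m:ℝ) ≤ (n:ℝ) := by exact_mod_cast hmn
    have hm1 : (0:ℝ) ∈ Ioo (-(m+1) : ℝ) (m+1) := ⟨by linarith, by linarith⟩
    have hsub : Icc (-(m+1) : ℝ) (m+1) ⊆ Icc (-(n+1) : ℝ) (n+1) :=
      Icc_subset_Icc (by linarith) (by linarith)
    have hIooIoo : Ioo (-(m+1) : ℝ) (m+1) ⊆ Ioo (-(n+1) : ℝ) (n+1) :=
      Ioo_subset_Ioo (by linarith) (by linarith)
    apply ODE_solution_unique_of_mem_Icc (v := w) (s := fun _ => univ) (fun t _ => hv t) hm1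
    · exact fun t ht => (hXd m t ht).continuousWithinAt
    · intro t ht
      rw [hw]; simp only [hproj t (Ioo_subset_Icc_self ht)]
      exact hXd' m t ht
    · exact fun _ _ => mem_univ _
    · exact fun t ht => ((hXd n t (hsub ht)).continuousWithinAt).mono hsub
    · intro t ht
      rw [hw]; simp only [hproj t (Ioo_subset_Icc_self ht)]
      exact hXd' n t (hIooIoo ht)
    · exact fun _ _ => mem_univ _
    · rw [hX0 m, hX0 n]
  -- global solution
  refine ⟨fun t => X (⌈|t|⌉₊) t, by simp [hX0], ?_⟩
  intro t
  set k : ℕ := ⌈|t|⌉₊ with hk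
  have htk : |t| ≤ (k:ℝ) := Nat.le_ceil _
  have hmemk : ∀ s : ℝ, |s| < (k:ℝ) + 1 → X (⌈|s|⌉₊) s = X k s := by
    intro s hs
    set j : ℕ := ⌈|s|⌉₊ with hj
    have hsj : |s| ≤ (j:ℝ) := Nat.le_ceil _
    rcases le_total j k with hjk | hkj
    · have h1 := huniq j k hjk (x := s) ⟨by cases abs_le.mp hsj; linarith, by cases abs_le.mp hsj; linarith⟩
      exact h1
    · have hmem : s ∈ Icc (-((k:ℝ)+1)) ((k:ℝ)+1) := by
        cases abs_lt.mp hs; constructor <;> linarith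
      exact (huniq k j hkj hmem).symm
  have heq : (fun s => X (⌈|s|⌉₊) s) =ᶠ[nhds t] X k := by
    have : ∀ᶠ s in nhds t, |s| < (k:ℝ) + 1 := by
      have hcont' : Continuous fun s : ℝ => |s| := continuous_abs
      have : IsOpen {s : ℝ | |s| < (k:ℝ)+1} := isOpen_lt hcont' continuous_const
      exact this.mem_nhds (by simp only [mem_setOf_eq]; linarith)
    filter_upwards [this] with s hs
    exact hmemk s hs
  have hd : HasDerivAt (X k) (v t (X k t)) t := by
    apply hXd' k
    cases abs_le.mp htk
    constructor <;> linarith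
  have := hd.congr_of_eventuallyEq heq
  rwa [show X k t = X (⌈|t|⌉₊) t from rfl] at this

end aux

section pend
open Set Real
open scoped NNReal
lemma lips_sin : LipschitzWith 1 Real.sin := by
  apply lipschitzWith_of_nnnorm_deriv_le Real.differentiable_sin
  intro x
  rw [Real.deriv_sin, ← NNReal.coe_le_coe]
  simpa using Real.abs_cos_le_one x

lemma lips_cos : LipschitzWith 1 Real.cos := by
  apply lipschitzWith_of_nnnorm_deriv_le Real.differentiable_cos
  intro x
  rw [Real.deriv_cos', ← NNReal.coe_le_coe]
  simpa using Real.abs_sin_le_one x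

/-- The pendulum vector field as a first-order system on `ℝ × ℝ`. -/
noncomputable def pendV (g : ℝ) (u : ℝ → ℝ) : ℝ → ℝ × ℝ → ℝ × ℝ :=
  fun t p => (p.2, -g * Real.cos p.1 + u t * Real.sin p.1)

lemma pendV_bounds (g : ℝ) (u : ℝ → ℝ) (hg : 0 < g) (hu : Continuous u) (a b : ℝ) :
    ∃ K : ℝ≥0, (∀ t ∈ Icc a b, LipschitzWith K (pendV g u t)) ∧
      (∀ t ∈ Icc a b, ∀ x, ‖pendV g u t x‖ ≤ (K:ℝ) + ‖x‖) := by
  obtain ⟨M, hM⟩ := (isCompact_Icc (a := a) (b := b)).exists_bound_of_continuousOn hu.continuousOn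
  set M' : ℝ := max M 0 with hM'def
  have hM0 : 0 ≤ M' := le_max_right _ _
  have hMle : ∀ t ∈ Icc a b, |u t| ≤ M' := by
    intro t ht
    exact le_trans (by simpa [Real.norm_eq_abs] using hM t ht) (le_max_left _ _)
  set Kr : ℝ := 1 + g + M' with hKr
  have hKr1 : 1 ≤ Kr := by linarith
  have hKr0 : 0 ≤ Kr := by linarith
  refine ⟨⟨Kr, hKr0⟩, ?_, ?_⟩
  · intro t ht
    apply LipschitzWith.of_dist_le_mul
    intro p q
    have hd1 : dist p.1 q.1 ≤ dist p q := by rw [Prod.dist_eq]; exact le_max_left _ _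
    have hd2 : dist p.2 q.2 ≤ dist p q := by rw [Prod.dist_eq]; exact le_max_right _ _
    simp only [pendV]
    rw [Prod.dist_eq]
    apply max_le
    · calc dist p.2 q.2 ≤ dist p q := hd2
      _ ≤ Kr * dist p q := le_mul_of_one_le_left dist_nonneg hKr1
    · have hcos : |Real.cos p.1 - Real.cos q.1| ≤ |p.1 - q.1| := by
        simpa [Real.dist_eq] using lips_cos.dist_le_mul p.1 q.1
      have hsin : |Real.sin p.1 - Real.sin q.1| ≤ |p.1 - q.1| := by
        simpa [Real.dist_eq] using lips_sin.dist_le_mul p.1 q.1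
      have hut : |u t| ≤ M' := hMle t ht
      rw [Real.dist_eq]
      have expand : -g * Real.cos p.1 + u t * Real.sin p.1 -
          (-g * Real.cos q.1 + u t * Real.sin q.1)
          = -g * (Real.cos p.1 - Real.cos q.1) + u t * (Real.sin p.1 - Real.sin q.1) := by ring
      rw [expand]
      calc |(-g) * (Real.cos p.1 - Real.cos q.1) + u t * (Real.sin p.1 - Real.sin q.1)|
          ≤ |(-g) * (Real.cos p.1 - Real.cos q.1)| + |u t * (Real.sin p.1 - Real.sin q.1)| :=
            abs_add_le _ _
        _ = g * |Real.cos p.1 - Real.cos q.1| + |u t| * |Real.sin p.1 - Real.sin q.1| := by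
            rw [abs_mul, abs_mul, abs_neg, abs_of_pos hg]
        _ ≤ g * |p.1 - q.1| + M' * |p.1 - q.1| := by
            apply add_le_add
            · exact mul_le_mul_of_nonneg_left hcos hg.le
            · exact mul_le_mul hut hsin (abs_nonneg _) hM0
        _ = (g + M') * |p.1 - q.1| := by ring
        _ ≤ (g + M') * dist p q := by
            apply mul_le_mul_of_nonneg_left _ (by linarith)
            rw [← Real.dist_eq]; exact hd1
        _ ≤ Kr * dist p q := by
            apply mul_le_mul_of_nonneg_right _ dist_nonneg
            linarith
  · intro t ht x
    simp only [pendV]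
    rw [Prod.norm_def]
    apply max_le
    · have : ‖x.2‖ ≤ ‖x‖ := norm_snd_le x
      have h0 : (0:ℝ) ≤ Kr := hKr0
      simp only [NNReal.coe_mk]
      linarith
    · have h1 : ‖-g * Real.cos x.1 + u t * Real.sin x.1‖ ≤ g + M' := by
        rw [Real.norm_eq_abs]
        calc |(-g) * Real.cos x.1 + u t * Real.sin x.1|
            ≤ |(-g) * Real.cos x.1| + |u t * Real.sin x.1| := abs_add_le _ _
          _ = g * |Real.cos x.1| + |u t| * |Real.sin x.1| := by
              rw [abs_mul, abs_mul, abs_neg, abs_of_pos hg]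
          _ ≤ g * 1 + M' * 1 := by
              apply add_le_add
              · exact mul_le_mul_of_nonneg_left (Real.abs_cos_le_one _) hg.le
              · exact mul_le_mul (hMle t ht) (Real.abs_sin_le_one _) (abs_nonneg _) hM0
          _ = g + M' := by ring
      have h2 : (0:ℝ) ≤ ‖x‖ := norm_nonneg x
      simp only [NNReal.coe_mk]
      change _ ≤ Kr + ‖x‖
      linarith

lemma pendV_contt (g : ℝ) (u : ℝ → ℝ) (hu : Continuous u) (x : ℝ × ℝ) :
    Continuous (fun t => pendV g u t x) := by
  simp only [pendV]
  exact continuous_const.prodMk (continuous_const.add (hu.mul continuous_const))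

lemma pend_sol (g : ℝ) (u : ℝ → ℝ) (hg : 0 < g) (hu : Continuous u) (x₀ : ℝ × ℝ) :
    ∃ x : ℝ → ℝ × ℝ, x 0 = x₀ ∧ ∀ t, HasDerivAt x (pendV g u t (x t)) t := by
  apply exists_sol_global
  · intro n
    obtain ⟨K, hK, hB⟩ := pendV_bounds g u hg hu (-(n+1) : ℝ) (n+1)
    exact ⟨K, (K:ℝ), K.coe_nonneg, hK, hB⟩
  · exact pendV_contt g u hu

lemma mono_piece (x b : ℝ → ℝ) {a c : ℝ} (hac : a < c)
    (hxd : ∀ t, HasDerivAt x (b t) t) (hbpos : ∀ s ∈ Ioo a c, 0 < b s) :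
    StrictMonoOn x (Icc a c) := by
  apply strictMonoOn_of_deriv_pos (convex_Icc _ _)
  · exact (Differentiable.continuous fun t => (hxd t).differentiableAt).continuousOn
  · intro s hs
    rw [interior_Icc] at hs
    rw [(hxd s).deriv]
    exact hbpos s hs

lemma anti_piece (x b : ℝ → ℝ) {a c : ℝ} (hac : a < c)
    (hxd : ∀ t, HasDerivAt x (b t) t) (hbneg : ∀ s ∈ Ioo a c, b s < 0) :
    StrictAntiOn x (Icc a c) := by
  apply strictAntiOn_of_deriv_neg (convex_Icc _ _)
  · exact (Differentiable.continuous fun t => (hxd t).differentiableAt).continuousOn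
  · intro s hs
    rw [interior_Icc] at hs
    rw [(hxd s).deriv]
    exact hbneg s hs

lemma neg_nhd (f : ℝ → ℝ) (T : ℝ) (hf : Continuous f) (h : f T < 0) :
    ∃ ε > 0, ∀ s, |s - T| < ε → f s < 0 := by
  have hop : IsOpen {s : ℝ | f s < 0} := isOpen_lt hf continuous_const
  obtain ⟨ε, hε, hball⟩ := Metric.isOpen_iff.mp hop T h
  exact ⟨ε, hε, fun s hs => hball (by rwa [Metric.mem_ball, Real.dist_eq])⟩

lemma pos_nhd (f : ℝ → ℝ) (T : ℝ) (hf : Continuous f) (h : 0 < f T) :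
    ∃ ε > 0, ∀ s, |s - T| < ε → 0 < f s := by
  obtain ⟨ε, hε, h'⟩ := neg_nhd (fun s => -f s) T hf.neg (by show -f T < 0; linarith)
  exact ⟨ε, hε, fun s hs => by have := h' s hs; linarith⟩

/-- negative derivative at `T`, zero value: the function is negative just after `T`. -/
lemma neg_on_right (b db : ℝ → ℝ) (T : ℝ) (hbd : ∀ t, HasDerivAt b (db t) t)
    (hdbc : Continuous db) (hbT : b T = 0) (hdbT : db T < 0) :
    ∃ δ > 0, ∀ s ∈ Ioc T (T + δ), b s < 0 := by
  obtain ⟨ε, hε, hball⟩ := neg_nhd db T hdbc hdbT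
  refine ⟨ε / 2, by positivity, ?_⟩
  have hanti := anti_piece b db (show T < T + ε/2 by linarith) hbd
    (fun s hs => hball s (by rw [abs_sub_lt_iff]; constructor <;> [linarith [hs.2]; linarith [hs.1]]))
  intro s hs
  have := hanti ⟨le_refl T, by linarith⟩ ⟨hs.1.le, hs.2⟩ hs.1
  rwa [hbT] at this

lemma pos_on_right (b db : ℝ → ℝ) (T : ℝ) (hbd : ∀ t, HasDerivAt b (db t) t)
    (hdbc : Continuous db) (hbT : b T = 0) (hdbT : 0 < db T) :
    ∃ δ > 0, ∀ s ∈ Ioc T (T + δ), 0 < b s := by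
  obtain ⟨δ, hδ, h'⟩ := neg_on_right (fun s => -b s) (fun s => -db s) T
    (fun t => (hbd t).neg) hdbc.neg (by show -b T = 0; rw [hbT]; ring)
    (by show -db T < 0; linarith)
  exact ⟨δ, hδ, fun s hs => by have := h' s hs; simp only [neg_lt_zero] at this; simpa using this⟩

/-- negative derivative at `T > 0`, zero value: the function is positive just before `T`. -/
lemma pos_on_left (b db : ℝ → ℝ) (T : ℝ) (hT : 0 < T) (hbd : ∀ t, HasDerivAt b (db t) t)
    (hdbc : Continuous db) (hbT : b T = 0) (hdbT : db T < 0) :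
    ∃ c, 0 ≤ c ∧ c < T ∧ ∀ s ∈ Ico c T, 0 < b s := by
  obtain ⟨ε, hε, hball⟩ := neg_nhd db T hdbc hdbT
  set c := max (T - ε / 2) (T / 2) with hc
  have hcT : c < T := max_lt (by linarith) (by linarith)
  have hc0 : 0 ≤ c := le_trans (by linarith) (le_max_right _ _)
  have hcε : T - ε/2 ≤ c := le_max_left _ _
  refine ⟨c, hc0, hcT, ?_⟩
  have hanti := anti_piece b db hcT hbd
    (fun s hs => hball s (by rw [abs_sub_lt_iff]; constructor <;> [linarith [hs.2]; linarith [hs.1]]))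
  intro s hs
  have := hanti ⟨hs.1, hs.2.le⟩ ⟨hcT.le, le_refl T⟩ hs.2
  rwa [hbT] at this

lemma neg_on_left (b db : ℝ → ℝ) (T : ℝ) (hT : 0 < T) (hbd : ∀ t, HasDerivAt b (db t) t)
    (hdbc : Continuous db) (hbT : b T = 0) (hdbT : 0 < db T) :
    ∃ c, 0 ≤ c ∧ c < T ∧ ∀ s ∈ Ico c T, b s < 0 := by
  obtain ⟨c, hc0, hcT, h'⟩ := pos_on_left (fun s => -b s) (fun s => -db s) T hT
    (fun t => (hbd t).neg) hdbc.neg (by show -b T = 0; rw [hbT]; ring)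
    (by show -db T < 0; linarith)
  refine ⟨c, hc0, hcT, fun s hs => ?_⟩
  have := h' s hs
  simp only [neg_pos] at this
  exact this

/-- if `x' T > 0` then there is a point slightly before `T` where `x` is smaller. -/
lemma left_lower (x : ℝ → ℝ) (d T : ℝ) (hT : 0 < T) (hxd : HasDerivAt x d T) (hd : 0 < d) :
    ∃ s, 0 < s ∧ s < T ∧ x s < x T := by
  have hslope := hasDerivAt_iff_tendsto_slope.mp hxd
  have hsl := hslope.mono_left (nhdsWithin_mono T (fun s hs => ne_of_lt hs))
  have hev : ∀ᶠ s in nhdsWithin T (Iio T), 0 < slope x T s := hsl.eventually (eventually_gt_nhds hd)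
  have hev2 : ∀ᶠ s in nhdsWithin T (Iio T), s ∈ Ioo 0 T :=
    Filter.eventually_mem_set.mpr (Ioo_mem_nhdsLT_of_mem ⟨hT, le_refl T⟩)
  obtain ⟨s, hs1, hs2⟩ := (hev.and hev2).exists
  refine ⟨s, hs2.1, hs2.2, ?_⟩
  rw [slope_def_field] at hs1
  rcases div_pos_iff.mp hs1 with ⟨h, h'⟩ | ⟨h, h'⟩
  · linarith [hs2.2]
  · linarith

lemma left_upper (x : ℝ → ℝ) (d T : ℝ) (hT : 0 < T) (hxd : HasDerivAt x d T) (hd : d < 0) :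
    ∃ s, 0 < s ∧ s < T ∧ x T < x s := by
  obtain ⟨s, h1, h2, h3⟩ := left_lower (fun s => -x s) (-d) T hT hxd.neg (by linarith)
  exact ⟨s, h1, h2, by linarith⟩


/-- Infinite-horizon Whitney problem: there is an initial angle `φ ∈ (0, π)`
from which the rod, released at rest, stays strictly above the floor for all
future times `t ≥ 0`. -/
theorem whitney_infinite_horizon (g : ℝ) (hg : 0 < g) (u : ℝ → ℝ) (hu : Continuous u) :
    ∃ φ ∈ Set.Ioo (0 : ℝ) Real.pi, ∃ α : ℝ → ℝ,
      IsPendulumSolution g u α ∧ α 0 = φ ∧ deriv α 0 = 0 ∧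
        ∀ t : ℝ, 0 ≤ t → α t ∈ Set.Ioo (0 : ℝ) Real.pi := by
  classical
  choose P hP0 hPd using fun x₀ : ℝ × ℝ => pend_sol g u hg hu x₀
  set Af : ℝ → ℝ → ℝ := fun φ t => (P (φ, 0) t).1 with hAfdef
  set Bf : ℝ → ℝ → ℝ := fun φ t => (P (φ, 0) t).2 with hBfdef
  have hA0 : ∀ φ, Af φ 0 = φ := fun φ => by simp only [hAfdef, hP0]
  have hB0 : ∀ φ, Bf φ 0 = 0 := fun φ => by simp only [hBfdef, hP0]
  have hAd : ∀ φ t, HasDerivAt (Af φ) (Bf φ t) t := by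
    intro φ t
    have h := hasFDerivAt_fst.comp_hasDerivAt t (hPd (φ, 0) t)
    simp only [Function.comp_def] at h
    simpa [pendV, hAfdef, hBfdef] using h
  have hBd : ∀ φ t, HasDerivAt (Bf φ) (-g * Real.cos (Af φ t) + u t * Real.sin (Af φ t)) t := by
    intro φ t
    have h := hasFDerivAt_snd.comp_hasDerivAt t (hPd (φ, 0) t)
    simp only [Function.comp_def] at h
    simpa [pendV, hAfdef, hBfdef] using h
  have hAc : ∀ φ, Continuous (Af φ) :=
    fun φ => Differentiable.continuous (fun t => (hAd φ t).differentiableAt)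
  have hBc : ∀ φ, Continuous (Bf φ) :=
    fun φ => Differentiable.continuous (fun t => (hBd φ t).differentiableAt)
  have hderivA : ∀ φ, deriv (Af φ) = Bf φ := fun φ => funext fun t => (hAd φ t).deriv
  have hderivB : ∀ φ t, deriv (Bf φ) t = -g * Real.cos (Af φ t) + u t * Real.sin (Af φ t) :=
    fun φ t => (hBd φ t).deriv
  have hdBc : ∀ φ, Continuous (fun s => -g * Real.cos (Af φ s) + u s * Real.sin (Af φ s)) :=
    fun φ => (continuous_const.mul (Real.continuous_cos.comp (hAc φ))).add
      (hu.mul (Real.continuous_sin.comp (hAc φ)))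
  -- Grönwall: continuous dependence on the initial angle
  have hgron : ∀ b : ℝ, 0 ≤ b → ∃ C : ℝ, 0 < C ∧ ∀ φ ψ : ℝ, ∀ t ∈ Icc (0:ℝ) b,
      |Af φ t - Af ψ t| ≤ |φ - ψ| * C := by
    intro b hb
    obtain ⟨K, hK, _⟩ := pendV_bounds g u hg hu 0 b
    refine ⟨Real.exp (K * b), Real.exp_pos _, ?_⟩
    intro φ ψ t ht
    set w : ℝ → ℝ × ℝ → ℝ × ℝ := fun s => pendV g u (max 0 (min b s)) with hw
    have hproj : ∀ s ∈ Icc (0:ℝ) b, max 0 (min b s) = s := fun s hs => by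
      rw [min_eq_right hs.2, max_eq_right hs.1]
    have hmem : ∀ s : ℝ, max 0 (min b s) ∈ Icc (0:ℝ) b := fun s =>
      ⟨le_max_left _ _, max_le hb (min_le_left _ _)⟩
    have hvw : ∀ s, LipschitzWith K (w s) := fun s => hK _ (hmem s)
    have hfc : Continuous (P (φ, 0)) :=
      Differentiable.continuous (fun s => (hPd (φ, 0) s).differentiableAt)
    have hgc : Continuous (P (ψ, 0)) :=
      Differentiable.continuous (fun s => (hPd (ψ, 0) s).differentiableAt)
    have ha : dist (P (φ, 0) 0) (P (ψ, 0) 0) ≤ |φ - ψ| := by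
      rw [hP0, hP0, Prod.dist_eq, Real.dist_eq, Real.dist_eq]
      simp
    have key := dist_le_of_trajectories_ODE (v := w) hvw hfc.continuousOn
      (fun s hs => by
        rw [hw]
        simp only [hproj s (Ico_subset_Icc_self hs)]
        exact (hPd (φ, 0) s).hasDerivWithinAt)
      hgc.continuousOn
      (fun s hs => by
        rw [hw]
        simp only [hproj s (Ico_subset_Icc_self hs)]
        exact (hPd (ψ, 0) s).hasDerivWithinAt)
      ha t ht
    have h1 : |Af φ t - Af ψ t| ≤ dist (P (φ, 0) t) (P (ψ, 0) t) := by
      rw [← Real.dist_eq, Prod.dist_eq]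
      exact le_max_left _ _
    have h2 : Real.exp ((K : ℝ) * (t - 0)) ≤ Real.exp ((K : ℝ) * b) := by
      apply Real.exp_le_exp.mpr
      apply mul_le_mul_of_nonneg_left _ K.coe_nonneg
      linarith [ht.2]
    calc |Af φ t - Af ψ t| ≤ |φ - ψ| * Real.exp ((K:ℝ) * (t - 0)) := le_trans h1 key
    _ ≤ |φ - ψ| * Real.exp ((K:ℝ) * b) := mul_le_mul_of_nonneg_left h2 (abs_nonneg _)
  -- the two "falling" sets
  set L : Set ℝ := {φ | ∃ t, 0 < t ∧ Af φ t < 0 ∧ ∀ s ∈ Icc (0:ℝ) t, Af φ s < π} with hLdef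
  set R : Set ℝ := {φ | ∃ t, 0 < t ∧ π < Af φ t ∧ ∀ s ∈ Icc (0:ℝ) t, 0 < Af φ s} with hRdef
  have hopenL : IsOpen L := by
    rw [Metric.isOpen_iff]
    intro φ hφ
    obtain ⟨t₀, ht₀, hval, hbelow⟩ := hφ
    obtain ⟨s₀, hs₀mem, hs₀max⟩ := isCompact_Icc.exists_isMaxOn (nonempty_Icc.mpr ht₀.le)
      (hAc φ).continuousOn
    set δ : ℝ := min (-(Af φ t₀)) (π - Af φ s₀) with hδdef
    have hδpos : 0 < δ := lt_min (by linarith) (by linarith [hbelow s₀ hs₀mem])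
    obtain ⟨C, hC, hCb⟩ := hgron t₀ ht₀.le
    refine ⟨δ / (2 * C), by positivity, ?_⟩
    intro ψ hψ
    rw [Metric.mem_ball, Real.dist_eq] at hψ
    have hkey : ∀ s ∈ Icc (0:ℝ) t₀, |Af ψ s - Af φ s| < δ := by
      intro s hs
      calc |Af ψ s - Af φ s| ≤ |ψ - φ| * C := hCb ψ φ s hs
      _ < (δ / (2 * C)) * C := mul_lt_mul_of_pos_right hψ hC
      _ = δ / 2 := by field_simp
      _ < δ := by linarith
    refine ⟨t₀, ht₀, ?_, ?_⟩
    · have h1 := (abs_lt.mp (hkey t₀ ⟨ht₀.le, le_refl _⟩)).2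
      have h2 : δ ≤ -(Af φ t₀) := min_le_left _ _
      linarith
    · intro s hs
      have h1 := (abs_lt.mp (hkey s hs)).2
      have h2 : δ ≤ π - Af φ s₀ := min_le_right _ _
      have h3 : Af φ s ≤ Af φ s₀ := hs₀max hs
      linarith
  have hopenR : IsOpen R := by
    rw [Metric.isOpen_iff]
    intro φ hφ
    obtain ⟨t₀, ht₀, hval, habove⟩ := hφ
    obtain ⟨s₀, hs₀mem, hs₀min⟩ := isCompact_Icc.exists_isMinOn (nonempty_Icc.mpr ht₀.le)
      (hAc φ).continuousOn
    set δ : ℝ := min (Af φ t₀ - π) (Af φ s₀) with hδdef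
    have hδpos : 0 < δ := lt_min (by linarith) (habove s₀ hs₀mem)
    obtain ⟨C, hC, hCb⟩ := hgron t₀ ht₀.le
    refine ⟨δ / (2 * C), by positivity, ?_⟩
    intro ψ hψ
    rw [Metric.mem_ball, Real.dist_eq] at hψ
    have hkey : ∀ s ∈ Icc (0:ℝ) t₀, |Af ψ s - Af φ s| < δ := by
      intro s hs
      calc |Af ψ s - Af φ s| ≤ |ψ - φ| * C := hCb ψ φ s hs
      _ < (δ / (2 * C)) * C := mul_lt_mul_of_pos_right hψ hC
      _ = δ / 2 := by field_simp
      _ < δ := by linarith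
    refine ⟨t₀, ht₀, ?_, ?_⟩
    · have h1 := (abs_lt.mp (hkey t₀ ⟨ht₀.le, le_refl _⟩)).1
      have h2 : δ ≤ Af φ t₀ - π := min_le_left _ _
      linarith
    · intro s hs
      have h1 := (abs_lt.mp (hkey s hs)).1
      have h2 : δ ≤ Af φ s₀ := min_le_right _ _
      have h3 : Af φ s₀ ≤ Af φ s := hs₀min hs
      linarith
  have hdisj : ∀ φ, φ ∈ L → φ ∈ R → False := by
    rintro φ ⟨t₁, ht₁, hv₁, hb₁⟩ ⟨t₂, ht₂, hv₂, hb₂⟩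
    rcases le_total t₁ t₂ with h | h
    · exact absurd (hb₂ t₁ ⟨ht₁.le, h⟩) (by linarith)
    · exact absurd (hb₁ t₂ ⟨ht₂.le, h⟩) (by linarith)
  -- 0 falls to the left
  have h0L : (0 : ℝ) ∈ L := by
    have hval0 : -g * Real.cos (Af 0 0) + u 0 * Real.sin (Af 0 0) = -g := by
      rw [hA0]
      simp
    obtain ⟨δ, hδpos, hbneg⟩ := neg_on_right (Bf 0) _ 0 (hBd 0) (hdBc 0) (hB0 0)
      (by rw [hval0]; linarith)
    have hanti := anti_piece (Af 0) (Bf 0) (show (0:ℝ) < 0 + δ by linarith) (hAd 0)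
      (fun s hs => hbneg s ⟨hs.1, hs.2.le⟩)
    refine ⟨δ, hδpos, ?_, ?_⟩
    · have := hanti ⟨le_refl 0, by linarith⟩ ⟨by linarith, by linarith⟩ hδpos
      rw [hA0] at this
      simpa using this
    · intro s hs
      have hle : Af 0 s ≤ Af 0 0 := by
        rcases eq_or_lt_of_le hs.1 with h | h
        · rw [← h]
        · exact (hanti ⟨le_refl 0, by linarith⟩ ⟨by linarith [hs.1], by linarith [hs.2]⟩ h).le
      rw [hA0] at hle
      linarith [Real.pi_pos]
  -- π falls to the right
  have hπR : π ∈ R := by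
    have hvalπ : -g * Real.cos (Af π 0) + u 0 * Real.sin (Af π 0) = g := by
      rw [hA0]
      simp
    obtain ⟨δ, hδpos, hbpos⟩ := pos_on_right (Bf π) _ 0 (hBd π) (hdBc π) (hB0 π)
      (by rw [hvalπ]; linarith)
    have hmono := mono_piece (Af π) (Bf π) (show (0:ℝ) < 0 + δ by linarith) (hAd π)
      (fun s hs => hbpos s ⟨hs.1, hs.2.le⟩)
    refine ⟨δ, hδpos, ?_, ?_⟩
    · have := hmono ⟨le_refl 0, by linarith⟩ ⟨by linarith, by linarith⟩ hδpos
      rw [hA0] at this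
      simpa using this
    · intro s hs
      have hle : Af π 0 ≤ Af π s := by
        rcases eq_or_lt_of_le hs.1 with h | h
        · rw [← h]
        · exact (hmono ⟨le_refl 0, by linarith⟩ ⟨by linarith [hs.1], by linarith [hs.2]⟩ h).le
      rw [hA0] at hle
      linarith [Real.pi_pos]
  -- a neutral initial angle exists
  obtain ⟨φ, hφIoo, hφLR⟩ : ∃ φ ∈ Ioo (0:ℝ) π, φ ∉ L ∧ φ ∉ R := by
    by_contra hcon
    push_neg at hcon
    have hsub : Ioo (0:ℝ) π ⊆ L ∪ R := by
      intro ψ hψ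
      by_cases h : ψ ∈ L
      · exact Or.inl h
      · exact Or.inr (hcon ψ hψ h)
    obtain ⟨ε₁, hε₁, hball₁⟩ := Metric.isOpen_iff.mp hopenL 0 h0L
    obtain ⟨ε₂, hε₂, hball₂⟩ := Metric.isOpen_iff.mp hopenR π hπR
    have hπ := Real.pi_pos
    have hinL : (Ioo (0:ℝ) π ∩ L).Nonempty := by
      refine ⟨min ε₁ π / 2, ⟨by positivity, ?_⟩, hball₁ ?_⟩
      · have : min ε₁ π ≤ π := min_le_right _ _
        linarith
      · rw [Metric.mem_ball, Real.dist_eq, sub_zero]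
        have h1 : min ε₁ π ≤ ε₁ := min_le_left _ _
        have h2 : 0 < min ε₁ π := lt_min hε₁ hπ
        rw [abs_of_pos (by linarith)]
        linarith
    have hinR : (Ioo (0:ℝ) π ∩ R).Nonempty := by
      refine ⟨π - min ε₂ π / 2, ⟨?_, ?_⟩, hball₂ ?_⟩
      · have : min ε₂ π ≤ π := min_le_right _ _
        linarith
      · have h2 : 0 < min ε₂ π := lt_min hε₂ hπ
        linarith
      · rw [Metric.mem_ball, Real.dist_eq]
        have h1 : min ε₂ π ≤ ε₂ := min_le_left _ _
        have h2 : 0 < min ε₂ π := lt_min hε₂ hπ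
        rw [show π - min ε₂ π / 2 - π = -(min ε₂ π / 2) by ring, abs_neg,
          abs_of_pos (by linarith)]
        linarith
    obtain ⟨z, hz⟩ := isPreconnected_Ioo L R hopenL hopenR hsub hinL hinR
    exact hdisj z hz.2.1 hz.2.2
  obtain ⟨hφL, hφR⟩ := hφLR
  -- conclude
  refine ⟨φ, hφIoo, Af φ, ⟨?_, ?_⟩, hA0 φ, ?_, ?_⟩
  · -- ContDiff ℝ 2
    rw [show (2 : WithTop ℕ∞) = 1 + 1 by norm_num]
    rw [contDiff_succ_iff_deriv]
    refine ⟨fun t => (hAd φ t).differentiableAt, by norm_num, ?_⟩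
    rw [hderivA φ, contDiff_one_iff_deriv]
    refine ⟨fun t => (hBd φ t).differentiableAt, ?_⟩
    have : deriv (Bf φ) = fun t => -g * Real.cos (Af φ t) + u t * Real.sin (Af φ t) :=
      funext (hderivB φ)
    rw [this]
    exact hdBc φ
  · intro t
    rw [hderivA φ]
    exact hderivB φ t
  · rw [hderivA φ]
    exact hB0 φ
  · -- the solution stays in (0, π) for t ≥ 0
    intro t ht
    by_contra hmem
    set S : Set ℝ := {s | 0 ≤ s ∧ (Af φ s ≤ 0 ∨ π ≤ Af φ s)} with hSdef
    have hSne : S.Nonempty := by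
      refine ⟨t, ht, ?_⟩
      rw [mem_Ioo, not_and_or, not_lt, not_lt] at hmem
      exact hmem
    have hSclosed : IsClosed S := by
      have hSeq : S = Ici 0 ∩ (Af φ ⁻¹' (Iic 0 ∪ Ici π)) := by
        ext s
        simp only [hSdef, mem_setOf_eq, mem_inter_iff, mem_Ici, mem_preimage, mem_union,
          mem_Iic]
      rw [hSeq]
      exact isClosed_Ici.inter ((isClosed_Iic.union isClosed_Ici).preimage (hAc φ))
    have hSbdd : BddBelow S := ⟨0, fun s hs => hs.1⟩
    set T : ℝ := sInf S with hTdef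
    have hTS : T ∈ S := hSclosed.csInf_mem hSne hSbdd
    have hT0 : 0 ≤ T := hTS.1
    have hTpos : 0 < T := by
      rcases eq_or_lt_of_le hT0 with h | h
      · exfalso
        rcases hTS.2 with h2 | h2 <;> rw [← h, hA0 φ] at h2
        · linarith [hφIoo.1]
        · linarith [hφIoo.2]
      · exact h
    have hbefore : ∀ s, 0 ≤ s → s < T → 0 < Af φ s ∧ Af φ s < π := by
      intro s hs0 hsT
      by_contra hcon
      have hsS : s ∈ S := by
        refine ⟨hs0, ?_⟩
        rw [not_and_or, not_lt, not_lt] at hcon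
        exact hcon
      exact absurd (csInf_le hSbdd hsS) (not_le.mpr hsT)
    have htendA : Filter.Tendsto (Af φ) (nhdsWithin T (Iio T)) (nhds (Af φ T)) :=
      ((hAc φ).continuousAt).mono_left nhdsWithin_le_nhds
    rcases hTS.2 with hTval | hTval
    · -- the pendulum hits the floor at angle 0 : show φ ∈ L, contradiction
      have hAT : Af φ T = 0 := by
        apply le_antisymm hTval
        have hev : ∀ᶠ s in nhdsWithin T (Iio T), 0 ≤ Af φ s := by
          filter_upwards [Ioo_mem_nhdsLT_of_mem (show T ∈ Ioc (0:ℝ) T from ⟨hTpos, le_refl T⟩)]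
            with s hs
          exact (hbefore s hs.1.le hs.2).1.le
        exact ge_of_tendsto htendA hev
      have hBT : Bf φ T < 0 := by
        rcases lt_trichotomy (Bf φ T) 0 with h | h | h
        · exact h
        · exfalso
          -- B T = 0 and B' T = -g < 0 : A was increasing into T, so A was negative before
          have hdval : -g * Real.cos (Af φ T) + u T * Real.sin (Af φ T) = -g := by
            rw [hAT]; simp
          obtain ⟨c, hc0, hcT, hbpos⟩ := pos_on_left (Bf φ) _ T hTpos (hBd φ) (hdBc φ) h
            (by rw [hdval]; linarith)
          have hmono := mono_piece (Af φ) (Bf φ) hcT (hAd φ)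
            (fun s hs => hbpos s ⟨hs.1.le, hs.2⟩)
          have h1 : Af φ c < Af φ T :=
            hmono ⟨le_refl c, hcT.le⟩ ⟨hcT.le, le_refl T⟩ hcT
          rw [hAT] at h1
          exact absurd h1 (not_lt.mpr (hbefore c hc0 hcT).1.le)
        · exfalso
          -- A' T > 0 : A was smaller (negative) just before T
          obtain ⟨s, hs0, hsT, hlt⟩ := left_lower (Af φ) (Bf φ T) T hTpos (hAd φ T) h
          rw [hAT] at hlt
          exact absurd hlt (not_lt.mpr (hbefore s hs0.le hsT).1.le)
      -- B is negative on a right neighborhood of T, so A drops below 0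
      obtain ⟨ε, hε, hball⟩ := neg_nhd (Bf φ) T (hBc φ) hBT
      set δ : ℝ := ε / 2 with hδdef
      have hδpos : 0 < δ := by positivity
      have hanti := anti_piece (Af φ) (Bf φ) (show T < T + δ by linarith) (hAd φ)
        (fun s hs => hball s (by rw [abs_sub_lt_iff]; constructor <;>
          [linarith [hs.2]; linarith [hs.1]]))
      have hdrop : ∀ s ∈ Ioc T (T + δ), Af φ s < 0 := by
        intro s hs
        have := hanti ⟨le_refl T, by linarith⟩ ⟨hs.1.le, hs.2⟩ hs.1
        rwa [hAT] at this
      apply hφL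
      refine ⟨T + δ, by linarith, hdrop (T + δ) ⟨by linarith, le_refl _⟩, ?_⟩
      intro s hs
      rcases lt_or_ge s T with h | h
      · exact (hbefore s hs.1 h).2
      · rcases eq_or_lt_of_le h with h' | h'
        · rw [← h', hAT]
          exact Real.pi_pos
        · have := hdrop s ⟨h', hs.2⟩
          linarith [Real.pi_pos]
    · -- the pendulum hits the floor at angle π : show φ ∈ R, contradiction
      have hAT : Af φ T = π := by
        apply le_antisymm _ hTval
        have hev : ∀ᶠ s in nhdsWithin T (Iio T), Af φ s ≤ π := by
          filter_upwards [Ioo_mem_nhdsLT_of_mem (show T ∈ Ioc (0:ℝ) T from ⟨hTpos, le_refl T⟩)]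
            with s hs
          exact (hbefore s hs.1.le hs.2).2.le
        exact le_of_tendsto htendA hev
      have hBT : 0 < Bf φ T := by
        rcases lt_trichotomy (Bf φ T) 0 with h | h | h
        · exfalso
          obtain ⟨s, hs0, hsT, hlt⟩ := left_upper (Af φ) (Bf φ T) T hTpos (hAd φ T) h
          rw [hAT] at hlt
          exact absurd hlt (not_lt.mpr (hbefore s hs0.le hsT).2.le)
        · exfalso
          have hdval : -g * Real.cos (Af φ T) + u T * Real.sin (Af φ T) = g := by
            rw [hAT]; simp
          obtain ⟨c, hc0, hcT, hbneg⟩ := neg_on_left (Bf φ) _ T hTpos (hBd φ) (hdBc φ) h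
            (by rw [hdval]; linarith)
          have hanti := anti_piece (Af φ) (Bf φ) hcT (hAd φ)
            (fun s hs => hbneg s ⟨hs.1.le, hs.2⟩)
          have h1 : Af φ T < Af φ c :=
            hanti ⟨le_refl c, hcT.le⟩ ⟨hcT.le, le_refl T⟩ hcT
          rw [hAT] at h1
          exact absurd h1 (not_lt.mpr (hbefore c hc0 hcT).2.le)
        · exact h
      obtain ⟨ε, hε, hball⟩ := pos_nhd (Bf φ) T (hBc φ) hBT
      set δ : ℝ := ε / 2 with hδdef
      have hδpos : 0 < δ := by positivity
      have hmono := mono_piece (Af φ) (Bf φ) (show T < T + δ by linarith) (hAd φ)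
        (fun s hs => hball s (by rw [abs_sub_lt_iff]; constructor <;>
          [linarith [hs.2]; linarith [hs.1]]))
      have hrise : ∀ s ∈ Ioc T (T + δ), π < Af φ s := by
        intro s hs
        have := hmono ⟨le_refl T, by linarith⟩ ⟨hs.1.le, hs.2⟩ hs.1
        rwa [hAT] at this
      apply hφR
      refine ⟨T + δ, by linarith, hrise (T + δ) ⟨by linarith, le_refl _⟩, ?_⟩
      intro s hs
      rcases lt_or_ge s T with h | h
      · exact (hbefore s hs.1 h).1
      · rcases eq_or_lt_of_le h with h' | h'
        · rw [← h', hAT]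
          exact Real.pi_pos
        · have := hrise s ⟨h', hs.2⟩
          linarith [Real.pi_pos]

end pend
end

section
/- Descent lemma: let M ≥ 0 and let ε ∈ (0, π/2) satisfy c := g·cos(ε) − M·sin(ε) > 0, and set δ := √(2ε/c). Suppose t₀ ∈ ℝ and |u(t)| ≤ M for all t ∈ [t₀, t₀ + δ]. Then for every solution α with 0 < α(t₀) ≤ ε and α'(t₀) ≤ 0, there exists t₁ ∈ [t₀, t₀ + δ] such that α(t₁) = 0 and α(s) ∈ (0, ε] for all s ∈ [t₀, t₁). (Once the rod is sufficiently close to the floor and not moving upward, the bounded inertial force cannot overcome gravity and the rod reaches the floor within time δ.) -/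
open Set Real


lemma pendulum_key (g : ℝ) (hg : 0 < g) (u : ℝ → ℝ) (hu : Continuous u)
    (M : ℝ) (hM : 0 ≤ M) (ε : ℝ) (hε : ε ∈ Set.Ioo (0:ℝ) (Real.pi/2))
    (c : ℝ) (hc : c = g * Real.cos ε - M * Real.sin ε) (hcpos : 0 < c)
    (δ t₀ : ℝ) (hub : ∀ t ∈ Set.Icc t₀ (t₀+δ), |u t| ≤ M)
    (α : ℝ → ℝ) (hα : IsPendulumSolution g u α)
    (h0' : α t₀ ≤ ε) (hv : deriv α t₀ ≤ 0)
    (t : ℝ) (ht : t ∈ Set.Icc t₀ (t₀+δ))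
    (hpos : ∀ s ∈ Set.Icc t₀ t, 0 < α s) :
    ∀ s ∈ Set.Icc t₀ t, α s ≤ ε ∧ deriv α s ≤ c * (t₀ - s) := by
  have hπ := Real.pi_pos
  have hαd : Differentiable ℝ α := hα.1.differentiable (by norm_num)
  have hαc : Continuous α := hαd.continuous
  have h2 : ContDiff ℝ ((1:ℕ) + 1) α := by exact_mod_cast hα.1
  rw [contDiff_succ_iff_deriv] at h2
  have hd1 : Differentiable ℝ (deriv α) := h2.2.2.differentiable (by norm_num)
  have hd1c : Continuous (deriv α) := hd1.continuous
  have hfc : Continuous (deriv (deriv α)) := by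
    rw [show deriv (deriv α) = fun t => -g * Real.cos (α t) + u t * Real.sin (α t) from
      funext hα.2]
    exact (continuous_const.mul (Real.continuous_cos.comp hαc)).add (hu.mul (Real.continuous_sin.comp hαc))
  have hbound : ∀ x, t₀ ≤ x → x ≤ t₀ + δ → 0 < α x → α x ≤ ε →
      deriv (deriv α) x ≤ -c := by
    intro x hx1 hx2 hx3 hx4
    rw [hα.2 x]
    have h1 : Real.cos ε ≤ Real.cos (α x) :=
      Real.cos_le_cos_of_nonneg_of_le_pi hx3.le (by linarith [hε.2]) hx4
    have h2' : Real.sin (α x) ≤ Real.sin ε :=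
      Real.sin_le_sin_of_le_of_le_pi_div_two (by linarith) hε.2.le hx4
    have h3 : 0 ≤ Real.sin (α x) :=
      Real.sin_nonneg_of_nonneg_of_le_pi hx3.le (by linarith [hε.2])
    have h4 : u x * Real.sin (α x) ≤ M * Real.sin ε :=
      calc u x * Real.sin (α x) ≤ |u x| * Real.sin (α x) :=
            mul_le_mul_of_nonneg_right (le_abs_self _) h3
        _ ≤ M * Real.sin (α x) := mul_le_mul_of_nonneg_right (hub x ⟨hx1, hx2⟩) h3
        _ ≤ M * Real.sin ε := mul_le_mul_of_nonneg_left h2' hM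
    nlinarith [mul_le_mul_of_nonneg_left h1 hg.le]
  set S : Set ℝ := {x | α x ≤ ε ∧ deriv α x ≤ c * (t₀ - x)} with hS
  have hScl : IsClosed S :=
    (isClosed_le hαc continuous_const).inter
      (isClosed_le hd1c (continuous_const.mul (continuous_const.sub continuous_id)))
  have ht₀S : t₀ ∈ S := ⟨h0', by simpa using hv⟩
  have main : Set.Icc t₀ t ⊆ S := by
    apply (hScl.inter isClosed_Icc).Icc_subset_of_forall_exists_gt ht₀S
    rintro x ⟨⟨hxε, hxd⟩, hxt₀, hxt⟩ y hy
    have hcx : c * (t₀ - x) ≤ 0 := by nlinarith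
    -- α'' < 0 near x
    have hx'' : deriv (deriv α) x ≤ -c :=
      hbound x hxt₀ (hxt.le.trans ht.2) (hpos x ⟨hxt₀, hxt.le⟩) hxε
    have hopen : IsOpen {w | deriv (deriv α) w < 0} := isOpen_lt hfc continuous_const
    obtain ⟨r, hr, hball⟩ := Metric.isOpen_iff.mp hopen x (by simpa using by linarith)
    set z : ℝ := min (min (x + r/2) t) y with hz
    have hxz : x < z := by
      apply lt_min (lt_min (by linarith) hxt)
      exact hy
    have hzy : z ≤ y := min_le_right _ _
    have hzt : z ≤ t := le_trans (min_le_left _ _) (min_le_right _ _)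
    have hzr : z ≤ x + r/2 := le_trans (min_le_left _ _) (min_le_left _ _)
    have hsub : Set.Icc x z ⊆ {w | deriv (deriv α) w < 0} := by
      intro w hw
      apply hball
      rw [Metric.mem_ball, Real.dist_eq, abs_of_nonneg (by linarith [hw.1])]
      linarith [hw.2]
    have hIccxz : Set.Icc x z ⊆ Set.Icc t₀ t := fun w hw => ⟨hxt₀.trans hw.1, hw.2.trans hzt⟩
    -- deriv α is strictly decreasing on [x,z]
    have hsa : StrictAntiOn (deriv α) (Set.Icc x z) := by
      apply strictAntiOn_of_deriv_neg (convex_Icc x z) hd1c.continuousOn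
      intro w hw
      rw [interior_Icc] at hw
      exact hsub ⟨hw.1.le, hw.2.le⟩
    have hderle : ∀ w ∈ Set.Icc x z, deriv α w ≤ deriv α x := by
      intro w hw
      rcases eq_or_lt_of_le hw.1 with h | h
      · rw [← h]
      · exact (hsa ⟨le_rfl, hxz.le⟩ hw h).le
    -- hence α is antitone on [x,z]
    have hαanti : AntitoneOn α (Set.Icc x z) := by
      apply antitoneOn_of_deriv_nonpos (convex_Icc x z) hαc.continuousOn
        (hαd.differentiableOn)
      intro w hw
      rw [interior_Icc] at hw
      exact le_trans (hderle w ⟨hw.1.le, hw.2.le⟩) (by linarith)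
    have hαle : ∀ w ∈ Set.Icc x z, α w ≤ ε :=
      fun w hw => le_trans (hαanti ⟨le_rfl, hxz.le⟩ hw hw.1) hxε
    have h5 : ∀ w ∈ Set.Icc x z, deriv (deriv α) w ≤ -c := by
      intro w hw
      exact hbound w (hxt₀.trans hw.1) ((hw.2.trans hzt).trans ht.2)
        (hpos w (hIccxz hw)) (hαle w hw)
    -- φ = deriv α + c (· - t₀) is antitone on [x,z]
    set φ : ℝ → ℝ := fun w => deriv α w + c * (w - t₀) with hφ
    have hφderiv : ∀ w, HasDerivAt φ (deriv (deriv α) w + c) w := by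
      intro w
      have h1 : HasDerivAt (fun w => c * (w - t₀)) (c * 1) w :=
        ((hasDerivAt_id w).sub_const t₀).const_mul c
      have h1' := ((hd1 w).hasDerivAt).add h1
      simp only [mul_one] at h1'
      exact h1'
    have hφanti : AntitoneOn φ (Set.Icc x z) := by
      apply antitoneOn_of_deriv_nonpos (f := φ) (convex_Icc x z)
        (Continuous.continuousOn (hd1c.add (continuous_const.mul (continuous_id.sub continuous_const))))
        (fun w _ => ((hφderiv w).differentiableAt).differentiableWithinAt)
      intro w hw
      rw [interior_Icc] at hw
      rw [(hφderiv w).deriv]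
      linarith [h5 w ⟨hw.1.le, hw.2.le⟩]
    have hφx : φ x ≤ 0 := by simp only [hφ]; linarith
    have hφz : φ z ≤ 0 := le_trans (hφanti ⟨le_rfl, hxz.le⟩ ⟨hxz.le, le_rfl⟩ hxz.le) hφx
    exact ⟨z, ⟨⟨hαle z ⟨hxz.le, le_rfl⟩, by simp only [hφ] at hφz; linarith⟩, hxz, hzy⟩⟩
  exact fun s hs => main hs

/-- Descent lemma: if the rod is within `ε` of the (right) horizontal position,
is not moving upward, and the inertial force is bounded by `M` with
`c = g cos ε - M sin ε > 0`, then the rod reaches the floor within time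
`δ = √(2ε/c)`, staying in `(0, ε]` until then. -/
theorem pendulum_descent (g : ℝ) (hg : 0 < g) (u : ℝ → ℝ) (hu : Continuous u)
    (M : ℝ) (hM : 0 ≤ M) (ε : ℝ) (hε : ε ∈ Set.Ioo (0 : ℝ) (Real.pi / 2))
    (c : ℝ) (hc : c = g * Real.cos ε - M * Real.sin ε) (hcpos : 0 < c)
    (δ : ℝ) (hδ : δ = Real.sqrt (2 * ε / c))
    (t₀ : ℝ) (hub : ∀ t ∈ Set.Icc t₀ (t₀ + δ), |u t| ≤ M)
    (α : ℝ → ℝ) (hα : IsPendulumSolution g u α)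
    (h0 : 0 < α t₀) (h0' : α t₀ ≤ ε) (hv : deriv α t₀ ≤ 0) :
    ∃ t₁ ∈ Set.Icc t₀ (t₀ + δ), α t₁ = 0 ∧
      ∀ s ∈ Set.Ico t₀ t₁, α s ∈ Set.Ioc (0 : ℝ) ε := by
  have hαd : Differentiable ℝ α := hα.1.differentiable (by norm_num)
  have hαc : Continuous α := hαd.continuous
  have hδ0 : 0 ≤ δ := hδ ▸ Real.sqrt_nonneg _
  have hδsq : δ ^ 2 = 2 * ε / c := by
    rw [hδ, sq_sqrt (div_nonneg (by linarith [hε.1]) hcpos.le)]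
  have key := pendulum_key g hg u hu M hM ε hε c hc hcpos δ t₀ hub α hα h0' hv
  have hdescent : ∀ t ∈ Set.Icc t₀ (t₀ + δ), (∀ s ∈ Set.Icc t₀ t, 0 < α s) →
      α t + c * (t - t₀)^2 / 2 ≤ α t₀ := by
    intro t ht hpos
    have hk := key t ht hpos
    set ψ : ℝ → ℝ := fun w => α w + c * (w - t₀)^2 / 2 with hψ
    have hψderiv : ∀ w, HasDerivAt ψ (deriv α w + c * (w - t₀)) w := by
      intro w
      have h1 : HasDerivAt (fun w => c * (w - t₀)^2 / 2)
          (c * ((2:ℕ) * (w - t₀)^1 * 1) / 2) w :=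
        ((((hasDerivAt_id w).sub_const t₀).pow 2).const_mul c).div_const 2
      have h2 : c * ((2:ℕ) * (w - t₀)^1 * 1) / 2 = c * (w - t₀) := by ring
      rw [h2] at h1
      exact ((hαd w).hasDerivAt).add h1
    have hψanti : AntitoneOn ψ (Set.Icc t₀ t) := by
      apply antitoneOn_of_deriv_nonpos (f := ψ) (convex_Icc t₀ t)
        (Continuous.continuousOn (hαc.add (((continuous_const.mul ((continuous_id.sub continuous_const).pow 2))).div_const 2)))
        (fun w _ => ((hψderiv w).differentiableAt).differentiableWithinAt)
      intro w hw
      rw [interior_Icc] at hw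
      rw [(hψderiv w).deriv]
      linarith [(hk w ⟨hw.1.le, hw.2.le⟩).2]
    have h6 := hψanti ⟨le_rfl, ht.1⟩ ⟨ht.1, le_rfl⟩ ht.1
    simp only [hψ, sub_self] at h6
    nlinarith [h6]
  -- the set where α hits the floor
  set Z : Set ℝ := Set.Icc t₀ (t₀ + δ) ∩ {x | α x ≤ 0} with hZ
  have hZcl : IsClosed Z := isClosed_Icc.inter (isClosed_le hαc continuous_const)
  have hZbdd : BddBelow Z := ⟨t₀, fun x hx => hx.1.1⟩
  have hZne : Z.Nonempty := by
    by_contra hne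
    rw [Set.not_nonempty_iff_eq_empty] at hne
    have hpos : ∀ x ∈ Set.Icc t₀ (t₀ + δ), 0 < α x := by
      intro x hx
      by_contra h
      push_neg at h
      exact absurd (show x ∈ Z from ⟨hx, h⟩) (by rw [hne]; exact Set.notMem_empty x)
    have hd := hdescent (t₀ + δ) ⟨by linarith, le_rfl⟩ (fun s hs => hpos s hs)
    have he : c * (t₀ + δ - t₀)^2 / 2 = ε := by
      have : (t₀ + δ - t₀)^2 = 2 * ε / c := by rw [← hδsq]; ring
      rw [this]; field_simp
    have := hpos (t₀ + δ) ⟨by linarith, le_rfl⟩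
    linarith [hd, he.ge]
  set t₁ : ℝ := sInf Z with ht₁
  have ht₁Z : t₁ ∈ Z := hZcl.csInf_mem hZne hZbdd
  have ht₁Icc : t₁ ∈ Set.Icc t₀ (t₀ + δ) := ht₁Z.1
  have hα₁le : α t₁ ≤ 0 := ht₁Z.2
  have hnot : ∀ s, t₀ ≤ s → s < t₁ → 0 < α s := by
    intro s h1 h2
    by_contra h
    push_neg at h
    exact notMem_of_lt_csInf h2 hZbdd ⟨⟨h1, h2.le.trans ht₁Icc.2⟩, h⟩
  have ht₀lt : t₀ < t₁ := by
    rcases eq_or_lt_of_le ht₁Icc.1 with h | h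
    · exfalso; rw [← h] at hα₁le; linarith
    · exact h
  have hα₁ge : 0 ≤ α t₁ := by
    have htend : Filter.Tendsto α (nhdsWithin t₁ (Set.Iio t₁)) (nhds (α t₁)) :=
      (hαc.tendsto t₁).mono_left nhdsWithin_le_nhds
    apply ge_of_tendsto htend
    filter_upwards [Ioo_mem_nhdsLT_of_mem (⟨ht₀lt, le_rfl⟩ : t₁ ∈ Set.Ioc t₀ t₁)] with s hs
    exact (hnot s hs.1.le hs.2).le
  refine ⟨t₁, ht₁Icc, le_antisymm hα₁le hα₁ge, ?_⟩
  intro s hs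
  have hspos : 0 < α s := hnot s hs.1 hs.2
  have hsIcc : s ∈ Set.Icc t₀ (t₀ + δ) := ⟨hs.1, hs.2.le.trans ht₁Icc.2⟩
  have hsle : α s ≤ ε :=
    (key s hsIcc (fun w hw => hnot w hw.1 (lt_of_le_of_lt hw.2 hs.2)) s ⟨hs.1, le_rfl⟩).1
  exact ⟨hspos, hsle⟩
end

section
/- Near-horizontal initial positions fall to the near side (right): for every g > 0 and every continuous u : ℝ → ℝ there exists ε > 0 such that for every φ ∈ (0, ε) and every solution α with α(0) = φ and α'(0) = 0, there exists t₁ > 0 with α(t₁) = 0 and α(s) ∈ (0, ε) for all s ∈ [0, t₁). -/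
open Real Set

/-- Near-horizontal initial positions fall to the near side (right): if the rod
starts at rest sufficiently close to the right horizontal position, it reaches
the floor on the right, staying close to the floor until contact. -/
theorem pendulum_falls_right_near_floor (g : ℝ) (hg : 0 < g)
    (u : ℝ → ℝ) (hu : Continuous u) :
    ∃ ε > (0 : ℝ), ∀ φ ∈ Set.Ioo (0 : ℝ) ε, ∀ α : ℝ → ℝ,
      IsPendulumSolution g u α → α 0 = φ → deriv α 0 = 0 →
        ∃ t₁ > (0 : ℝ), α t₁ = 0 ∧ ∀ s ∈ Set.Ico (0 : ℝ) t₁, α s ∈ Set.Ioo (0 : ℝ) ε := by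
  obtain ⟨C, hC⟩ : ∃ C, ∀ t ∈ Set.Icc (0:ℝ) 1, ‖u t‖ ≤ C :=
    isCompact_Icc.exists_bound_of_continuousOn hu.continuousOn
  set M := max C 0 with hMdef
  have hM0 : 0 ≤ M := le_max_right _ _
  have hMu : ∀ t ∈ Set.Icc (0:ℝ) 1, |u t| ≤ M := fun t ht => (hC t ht).trans (le_max_left _ _)
  set ε := min 1 (min (g/8) (g/(4*(M+1)))) with hεdef
  have hε0 : 0 < ε := lt_min one_pos (lt_min (by positivity) (by positivity))
  have hε1 : ε ≤ 1 := min_le_left _ _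
  have hε8 : ε ≤ g/8 := (min_le_right _ _).trans (min_le_left _ _)
  have hεM : ε ≤ g/(4*(M+1)) := (min_le_right _ _).trans (min_le_right _ _)
  refine ⟨ε, hε0, ?_⟩
  rintro φ ⟨hφ0, hφε⟩ α ⟨hC2, heq⟩ hα0 hα'0
  have hd1 : Differentiable ℝ α := hC2.differentiable (by norm_num)
  have hd2 : Differentiable ℝ (deriv α) := by
    have := (contDiff_succ_iff_deriv.mp (by exact_mod_cast hC2 : ContDiff ℝ ((1:ℕ)+1) α)).2.2
    exact this.differentiable (by norm_num)
  have hcont : Continuous α := hd1.continuous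
  set c := g/4 with hcdef
  have hc0 : 0 < c := by positivity
  set T := Real.sqrt (2*ε/c) with hTdef
  have hT0 : 0 < T := Real.sqrt_pos.mpr (by positivity)
  have hTsq : c*T^2/2 = ε := by
    rw [hTdef, Real.sq_sqrt (by positivity)]
    field_simp
  have hT1 : T ≤ 1 := by
    rw [hTdef, show (1:ℝ) = Real.sqrt 1 by simp]
    apply Real.sqrt_le_sqrt
    rw [div_le_one hc0, hcdef]
    linarith
  -- Step 1: acceleration bound
  have haccel : ∀ s ∈ Set.Icc (0:ℝ) 1, 0 ≤ α s → α s ≤ ε → deriv (deriv α) s ≤ -c := by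
    intro s hs h0 hε'
    rw [heq s]
    have hπ3 : α s ≤ π/3 := hε'.trans (hε1.trans (by linarith [Real.pi_gt_three]))
    have hcos : (1:ℝ)/2 ≤ Real.cos (α s) := by
      have := Real.cos_le_cos_of_nonneg_of_le_pi h0 (by linarith [Real.pi_pos]) hπ3
      rwa [Real.cos_pi_div_three] at this
    have hsin1 : Real.sin (α s) ≤ α s := Real.sin_le h0
    have hsin0 : 0 ≤ Real.sin (α s) :=
      Real.sin_nonneg_of_nonneg_of_le_pi h0 (hπ3.trans (by linarith [Real.pi_pos]))
    have hub : |u s| ≤ M := hMu s hs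
    have h1 : u s * Real.sin (α s) ≤ M * ε := by
      calc u s * Real.sin (α s) ≤ |u s| * Real.sin (α s) :=
            mul_le_mul_of_nonneg_right (le_abs_self _) hsin0
        _ ≤ M * (α s) := mul_le_mul hub hsin1 hsin0 hM0
        _ ≤ M * ε := mul_le_mul_of_nonneg_left hε' hM0
    have h2 : M * ε ≤ g/4 := by
      have h3 : (M+1) * ε ≤ (M+1) * (g/(4*(M+1))) :=
        mul_le_mul_of_nonneg_left hεM (by positivity)
      have h4 : (M+1) * (g/(4*(M+1))) = g/4 := by field_simp
      nlinarith
    have h5 : -g * Real.cos (α s) ≤ -g * (1/2) := by nlinarith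
    rw [hcdef]; linarith
  -- Step 2: parabola bound on regions where 0 ≤ α ≤ ε
  have hfall : ∀ x ∈ Set.Icc (0:ℝ) 1, (∀ s ∈ Set.Icc (0:ℝ) x, 0 ≤ α s ∧ α s ≤ ε) →
      α x ≤ φ - c*x^2/2 := by
    intro x hx hreg
    have hx0 : (0:ℝ) ≤ x := hx.1
    have hsub : Set.Icc (0:ℝ) x ⊆ Set.Icc 0 1 := Set.Icc_subset_Icc le_rfl hx.2
    have hA : ∀ t ∈ Set.Icc (0:ℝ) x, deriv α t ≤ -(c*t) := by
      have hanti : AntitoneOn (fun t => deriv α t + c*t) (Set.Icc 0 x) := by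
        apply antitoneOn_of_deriv_nonpos (convex_Icc 0 x)
        · exact (hd2.continuous.add (continuous_const.mul continuous_id)).continuousOn
        · exact ((hd2.add ((differentiable_id.const_mul c))).differentiableOn)
        · intro t ht
          rw [interior_Icc] at ht
          have hder : deriv (fun t => deriv α t + c*t) t = deriv (deriv α) t + c := by
            have h1 : HasDerivAt (fun t => deriv α t + c*t) (deriv (deriv α) t + c*1) t :=
              ((hd2 t).hasDerivAt.add ((hasDerivAt_id t).const_mul c))
            simpa using h1.deriv
          rw [hder]
          have ht' : t ∈ Set.Icc (0:ℝ) x := ⟨ht.1.le, ht.2.le⟩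
          have := haccel t (hsub ht') (hreg t ht').1 (hreg t ht').2
          linarith
      intro t ht
      have := hanti (Set.left_mem_Icc.mpr hx0) ht ht.1
      simp only [hα'0, mul_zero, add_zero, zero_add] at this
      linarith
    have hanti2 : AntitoneOn (fun t => α t + c*t^2/2) (Set.Icc 0 x) := by
      apply antitoneOn_of_deriv_nonpos (convex_Icc 0 x)
      · exact (hcont.add ((continuous_const.mul (continuous_pow 2)).div_const 2)).continuousOn
      · exact (hd1.add (((differentiable_pow 2).const_mul c).div_const 2)).differentiableOn
      · intro t ht
        rw [interior_Icc] at ht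
        have hder : deriv (fun t => α t + c*t^2/2) t = deriv α t + c*t := by
          have h1 : HasDerivAt (fun t => α t + c*t^2/2)
              (deriv α t + c*((2:ℕ)*t^1)/2) t := by
            exact ((hd1 t).hasDerivAt.add (((hasDerivAt_pow 2 t).const_mul c).div_const 2))
          have := h1.deriv
          rw [this]; push_cast; ring
        rw [hder]
        have := hA t ⟨ht.1.le, ht.2.le⟩
        linarith
    have := hanti2 (Set.left_mem_Icc.mpr hx0) (Set.right_mem_Icc.mpr hx0) hx0
    simp only [hα0] at this
    nlinarith
  -- helper: find nearby earlier point with α in open set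
  have hnear : ∀ (b : ℝ) (P : Set ℝ), 0 < b → IsOpen P → α b ∈ P →
      ∃ y, 0 ≤ y ∧ y < b ∧ α y ∈ P := by
    intro b P hb0 hP hmem
    have hev : α ⁻¹' P ∈ nhds b := hcont.continuousAt (hP.mem_nhds hmem)
    obtain ⟨δ, hδ0, hδ⟩ := Metric.mem_nhds_iff.mp hev
    refine ⟨max 0 (b - δ/2), le_max_left _ _, max_lt hb0 (by linarith), hδ ?_⟩
    rcases le_total 0 (b - δ/2) with h | h
    · rw [max_eq_right h, Metric.mem_ball, Real.dist_eq, abs_lt]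
      constructor <;> linarith
    · rw [max_eq_left (by linarith), Metric.mem_ball, Real.dist_eq, abs_lt]
      constructor <;> linarith
  -- Lemma C: parabola bound while α stays positive
  have hstay : ∀ b, 0 < b → b ≤ T → (∀ s ∈ Set.Ico (0:ℝ) b, 0 < α s) →
      ∀ x ∈ Set.Icc (0:ℝ) b, α x ≤ φ - c*x^2/2 := by
    intro b hb0 hbT hpos
    have hb1 : b ≤ 1 := hbT.trans hT1
    have hnn : ∀ s ∈ Set.Icc (0:ℝ) b, 0 ≤ α s := by
      intro s hs
      rcases eq_or_lt_of_le hs.2 with heq' | hlt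
      · subst heq'
        by_contra h
        push_neg at h
        obtain ⟨y, hy0, hyb, hyP⟩ := hnear s (Set.Iio 0) hb0 isOpen_Iio h
        exact absurd hyP (not_lt.mpr (hpos y ⟨hy0, hyb⟩).le)
      · exact (hpos s ⟨hs.1, hlt⟩).le
    have hle : ∀ s ∈ Set.Icc (0:ℝ) b, α s ≤ ε := by
      by_contra h
      push_neg at h
      obtain ⟨x₀, hx₀, hx₀ε⟩ := h
      set B := Set.Icc (0:ℝ) b ∩ {x | ε ≤ α x} with hBdef
      have hBne : B.Nonempty := ⟨x₀, hx₀, hx₀ε.le⟩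
      have hBc : IsClosed B := isClosed_Icc.inter (isClosed_le continuous_const hcont)
      have hBbd : BddBelow B := ⟨0, fun x hx => hx.1.1⟩
      set m := sInf B with hmdef
      have hmB : m ∈ B := hBc.csInf_mem hBne hBbd
      have hm0 : 0 < m := by
        rcases eq_or_lt_of_le hmB.1.1 with h' | h'
        · exfalso
          have h2 : ε ≤ α m := hmB.2
          rw [← h', hα0] at h2
          linarith
        · exact h'
      have hmle : α m ≤ ε := by
        by_contra h'
        push_neg at h'
        obtain ⟨y, hy0, hym, hyP⟩ := hnear m (Set.Ioi ε) hm0 isOpen_Ioi h'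
        have hyB : y ∈ B := ⟨⟨hy0, hym.le.trans hmB.1.2⟩, show ε ≤ α y from le_of_lt (show ε < α y from hyP)⟩
        exact absurd (csInf_le hBbd hyB) (not_le.mpr hym)
      have hmf : α m ≤ φ - c*m^2/2 := by
        apply hfall m ⟨hmB.1.1, hmB.1.2.trans hb1⟩
        intro s hs
        refine ⟨hnn s ⟨hs.1, hs.2.trans hmB.1.2⟩, ?_⟩
        rcases eq_or_lt_of_le hs.2 with h' | h'
        · subst h'; exact hmle
        · by_contra h''
          push_neg at h''
          have : s ∈ B := ⟨⟨hs.1, hs.2.trans hmB.1.2⟩, h''.le⟩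
          exact absurd (csInf_le hBbd this) (not_le.mpr h')
      have h2 : ε ≤ α m := hmB.2
      have hq : 0 ≤ c*m^2/2 := by positivity
      linarith
    intro x hx
    exact hfall x ⟨hx.1, hx.2.trans hb1⟩
      (fun s hs => ⟨hnn s ⟨hs.1, hs.2.trans hx.2⟩, hle s ⟨hs.1, hs.2.trans hx.2⟩⟩)
  -- Step 4: existence of first zero
  set N := Set.Icc (0:ℝ) T ∩ {t | α t ≤ 0} with hNdef
  have hNne : N.Nonempty := by
    by_contra h
    rw [Set.not_nonempty_iff_eq_empty, Set.eq_empty_iff_forall_notMem] at h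
    have hpos : ∀ s ∈ Set.Ico (0:ℝ) T, 0 < α s := by
      intro s hs
      by_contra h'
      push_neg at h'
      exact h s ⟨⟨hs.1, hs.2.le⟩, h'⟩
    have h1 := hstay T hT0 le_rfl hpos T ⟨hT0.le, le_rfl⟩
    have h2 : ¬ (α T ≤ 0) := fun h' => h T ⟨⟨hT0.le, le_rfl⟩, h'⟩
    push_neg at h2
    nlinarith
  have hNc : IsClosed N := isClosed_Icc.inter (isClosed_le hcont continuous_const)
  have hNbd : BddBelow N := ⟨0, fun x hx => hx.1.1⟩
  set t₁ := sInf N with ht₁def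
  have ht₁N : t₁ ∈ N := hNc.csInf_mem hNne hNbd
  have ht₁0 : 0 < t₁ := by
    rcases eq_or_lt_of_le ht₁N.1.1 with h' | h'
    · exfalso
      have h2 : α t₁ ≤ 0 := ht₁N.2
      rw [← h', hα0] at h2
      linarith
    · exact h'
  have hpos : ∀ s ∈ Set.Ico (0:ℝ) t₁, 0 < α s := by
    intro s hs
    by_contra h'
    push_neg at h'
    have : s ∈ N := ⟨⟨hs.1, hs.2.le.trans ht₁N.1.2⟩, h'⟩
    exact absurd (csInf_le hNbd this) (not_le.mpr hs.2)
  have hbound := hstay t₁ ht₁0 ht₁N.1.2 hpos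
  have hzero : α t₁ = 0 := by
    refine le_antisymm ht₁N.2 ?_
    by_contra h
    push_neg at h
    obtain ⟨y, hy0, hyb, hyP⟩ := hnear t₁ (Set.Iio 0) ht₁0 isOpen_Iio h
    exact absurd hyP (not_lt.mpr (hpos y ⟨hy0, hyb⟩).le)
  refine ⟨t₁, ht₁0, hzero, ?_⟩
  intro s hs
  refine ⟨hpos s hs, ?_⟩
  have := hbound s ⟨hs.1, hs.2.le⟩
  nlinarith [sq_nonneg s]
end

section
/- Near-horizontal initial positions fall to the near side (left): for every g > 0 and every continuous u : ℝ → ℝ there exists ε > 0 such that for every φ ∈ (π − ε, π) and every solution α with α(0) = φ and α'(0) = 0, there exists t₁ > 0 with α(t₁) = π and α(s) ∈ (π − ε, π) for all s ∈ [0, t₁). -/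
/-- If the second derivative is at least `c` on `[0, b]` and the first derivative
vanishes at `0`, then `deriv α s ≥ c * s` and `α s ≥ α 0 + c * s ^ 2 / 2` on `[0, b]`. -/
lemma pendulum_growth (α : ℝ → ℝ) (hα : ContDiff ℝ 2 α) (c b : ℝ)
    (h0 : deriv α 0 = 0)
    (key : ∀ s ∈ Set.Icc (0:ℝ) b, c ≤ deriv (deriv α) s) :
    ∀ s ∈ Set.Icc (0:ℝ) b, c * s ≤ deriv α s ∧ α 0 + c * s ^ 2 / 2 ≤ α s := by
  have h2 : ContDiff ℝ (1+1) α := by exact_mod_cast hα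
  have hd1 : Differentiable ℝ α := hα.differentiable (by norm_num)
  have hd2 : Differentiable ℝ (deriv α) :=
    ((contDiff_succ_iff_deriv.mp h2).2.2).differentiable one_ne_zero
  have hmono1 : MonotoneOn (fun s => deriv α s - c * s) (Set.Icc 0 b) := by
    apply monotoneOn_of_deriv_nonneg (convex_Icc 0 b)
    · exact (hd2.continuous.sub (continuous_const.mul continuous_id)).continuousOn
    · exact fun s _ => ((hd2 s).sub ((differentiable_id.const_mul c) s)).differentiableWithinAt
    · intro s hs
      rw [interior_Icc] at hs
      have hder : HasDerivAt (fun s => deriv α s - c * s) (deriv (deriv α) s - c * 1) s :=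
        ((hd2 s).hasDerivAt).sub ((hasDerivAt_id s).const_mul c)
      rw [hder.deriv]
      have := key s ⟨hs.1.le, hs.2.le⟩
      linarith
  have hv : ∀ s ∈ Set.Icc (0:ℝ) b, c * s ≤ deriv α s := by
    intro s hs
    have h0b : (0:ℝ) ∈ Set.Icc (0:ℝ) b := ⟨le_rfl, le_trans hs.1 hs.2⟩
    have := hmono1 h0b hs hs.1
    simp only [h0, mul_zero, sub_zero, zero_sub] at this
    linarith
  have hmono2 : MonotoneOn (fun s => α s - c * s ^ 2 / 2) (Set.Icc 0 b) := by
    apply monotoneOn_of_deriv_nonneg (convex_Icc 0 b)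
    · exact (hd1.continuous.sub ((continuous_const.mul (continuous_pow 2)).div_const 2)).continuousOn
    · intro s _
      exact ((hd1 s).sub (((differentiable_pow 2).const_mul c).div_const 2 s)).differentiableWithinAt
    · intro s hs
      rw [interior_Icc] at hs
      have h1 : HasDerivAt (fun x : ℝ => c * x ^ 2 / 2) (c * s) s := by
        have h1' := ((hasDerivAt_pow 2 s).const_mul c).div_const 2
        exact h1'.congr_deriv (by simp only [Nat.cast_ofNat, Nat.reduceSub, pow_one]; ring)
      have hder : HasDerivAt (fun x => α x - c * x ^ 2 / 2) (deriv α s - c * s) s :=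
        (hd1 s).hasDerivAt.sub h1
      rw [hder.deriv]
      have := hv s ⟨hs.1.le, hs.2.le⟩
      linarith
  intro s hs
  refine ⟨hv s hs, ?_⟩
  have h0b : (0:ℝ) ∈ Set.Icc (0:ℝ) b := ⟨le_rfl, le_trans hs.1 hs.2⟩
  have := hmono2 h0b hs hs.1
  simp only [ne_eq, OfNat.ofNat_ne_zero, not_false_eq_true, zero_pow, mul_zero, zero_div,
    sub_zero] at this
  linarith

/-- Continuous induction: as long as the solution stays below `π`, it stays above
`π - ε` and in fact grows quadratically, provided the acceleration is at least `c`
whenever `α ∈ [π - ε, π]`. -/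
lemma pendulum_stays (α : ℝ → ℝ) (hα : ContDiff ℝ 2 α) (ε c b φ : ℝ)
    (hc : 0 ≤ c) (hb : 0 ≤ b) (hb1 : b ≤ 1) (hφ : Real.pi - ε < φ)
    (hα0 : α 0 = φ) (h0 : deriv α 0 = 0)
    (hup : ∀ s ∈ Set.Icc (0:ℝ) b, α s ≤ Real.pi)
    (key : ∀ s ∈ Set.Icc (0:ℝ) 1, Real.pi - ε ≤ α s → α s ≤ Real.pi →
      c ≤ deriv (deriv α) s) :
    ∀ s ∈ Set.Icc (0:ℝ) b, φ + c * s ^ 2 / 2 ≤ α s := by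
  have hcont := hα.continuous
  set D : Set ℝ := {t | t ∈ Set.Icc (0:ℝ) b ∧ ∀ s ∈ Set.Icc (0:ℝ) t, Real.pi - ε ≤ α s}
    with hDdef
  have h0D : (0:ℝ) ∈ D := by
    refine ⟨⟨le_rfl, hb⟩, fun s hs => ?_⟩
    have hs0 : s = 0 := le_antisymm hs.2 hs.1
    rw [hs0, hα0]; linarith
  have hbdd : BddAbove D := ⟨b, fun t ht => ht.1.2⟩
  have hne : D.Nonempty := ⟨0, h0D⟩
  set τ := sSup D with hτdef
  have hτ0 : 0 ≤ τ := le_csSup hbdd h0D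
  have hτb : τ ≤ b := csSup_le hne fun t ht => ht.1.2
  have hlow : ∀ s, 0 ≤ s → s < τ → Real.pi - ε ≤ α s := by
    intro s hs0 hsτ
    obtain ⟨t, htD, hst⟩ := exists_lt_of_lt_csSup hne hsτ
    exact htD.2 s ⟨hs0, hst.le⟩
  have hlowτ : ∀ s ∈ Set.Icc (0:ℝ) τ, Real.pi - ε ≤ α s := by
    intro s hs
    rcases lt_or_eq_of_le hs.2 with h | h
    · exact hlow s hs.1 h
    · rw [h]
      rcases eq_or_lt_of_le hτ0 with h0' | h0'
      · rw [← h0', hα0]; linarith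
      · refine ge_of_tendsto ((hcont.tendsto τ).mono_left (nhdsWithin_le_nhds : nhdsWithin τ (Set.Iio τ) ≤ nhds τ)) ?_
        filter_upwards [Ioo_mem_nhdsLT_of_mem (⟨h0', le_rfl⟩ : τ ∈ Set.Ioc 0 τ)] with r hr
        exact hlow r hr.1.le hr.2
  have hkeyτ : ∀ s ∈ Set.Icc (0:ℝ) τ, c ≤ deriv (deriv α) s := fun s hs =>
    key s ⟨hs.1, hs.2.trans (hτb.trans hb1)⟩ (hlowτ s hs) (hup s ⟨hs.1, hs.2.trans hτb⟩)
  have hgrow := pendulum_growth α hα c τ h0 hkeyτ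
  have hτeq : τ = b := by
    by_contra hne'
    have hτlt : τ < b := lt_of_le_of_ne hτb hne'
    have hατ : Real.pi - ε < α τ := by
      have h1 := (hgrow τ ⟨hτ0, le_rfl⟩).2
      rw [hα0] at h1
      nlinarith [sq_nonneg τ, mul_nonneg hc (sq_nonneg τ)]
    have hev : ∀ᶠ r in nhds τ, Real.pi - ε < α r :=
      (hcont.continuousAt).eventually (eventually_gt_nhds hατ)
    rw [Metric.eventually_nhds_iff] at hev
    obtain ⟨δ, hδ0, hδ⟩ := hev
    set t' := min (τ + δ/2) b with ht'def
    have hτt' : τ < t' := lt_min (by linarith) hτlt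
    have ht'D : t' ∈ D := by
      refine ⟨⟨le_trans hτ0 hτt'.le, min_le_right _ _⟩, ?_⟩
      intro s hs
      rcases le_or_gt s τ with h | h
      · exact hlowτ s ⟨hs.1, h⟩
      · have hd : dist s τ < δ := by
          rw [Real.dist_eq, abs_of_pos (by linarith)]
          have hsle : s ≤ τ + δ/2 := hs.2.trans (min_le_left _ _)
          linarith
        exact (hδ hd).le
    have := le_csSup hbdd ht'D
    linarith
  intro s hs
  have := (hgrow s (hτeq ▸ hs)).2
  rw [hα0] at this
  linarith

/-- Near-horizontal initial positions fall to the near side (left): if the rod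
starts at rest sufficiently close to the left horizontal position `π`, it
reaches the floor on the left, staying close to the floor until contact. -/
theorem pendulum_falls_left_near_floor (g : ℝ) (hg : 0 < g)
    (u : ℝ → ℝ) (hu : Continuous u) :
    ∃ ε > (0 : ℝ), ∀ φ ∈ Set.Ioo (Real.pi - ε) Real.pi, ∀ α : ℝ → ℝ,
      IsPendulumSolution g u α → α 0 = φ → deriv α 0 = 0 →
        ∃ t₁ > (0 : ℝ), α t₁ = Real.pi ∧
          ∀ s ∈ Set.Ico (0 : ℝ) t₁, α s ∈ Set.Ioo (Real.pi - ε) Real.pi := by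
  obtain ⟨x₀, hx₀, hmax⟩ := isCompact_Icc.exists_isMaxOn
    (Set.nonempty_Icc.mpr zero_le_one) ((hu.abs).continuousOn :
      ContinuousOn (fun t => |u t|) (Set.Icc (0:ℝ) 1))
  set M := |u x₀| with hMdef
  have hM0 : 0 ≤ M := abs_nonneg _
  have hMb : ∀ t ∈ Set.Icc (0:ℝ) 1, |u t| ≤ M := fun t ht => hmax ht
  have hgM : 0 < g + 2 * M + 2 := by linarith
  set ε := min (g/4) (g/(g + 2*M + 2)) with hεdef
  have hε0 : 0 < ε := lt_min (by positivity) (by positivity)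
  have hεg : ε ≤ g/4 := min_le_left _ _
  have hεM : ε * (g + 2*M + 2) ≤ g := by
    have h := min_le_right (g/4) (g/(g + 2*M + 2))
    rw [le_div_iff₀ hgM] at h
    exact h
  have hε1 : ε ≤ 1 := by
    nlinarith
  have hπ : 3 < Real.pi := by
    have := Real.pi_gt_three
    linarith
  refine ⟨ε, hε0, ?_⟩
  intro φ hφ α hsol hα0 hα'0
  obtain ⟨hα2, heq⟩ := hsol
  have hcont := hα2.continuous
  set c := g/2 with hcdef
  have hc0 : 0 ≤ c := by positivity
  have hkey : ∀ s ∈ Set.Icc (0:ℝ) 1, Real.pi - ε ≤ α s → α s ≤ Real.pi →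
      c ≤ deriv (deriv α) s := by
    intro s hs h1 h2
    rw [heq s]
    have hx0 : 0 ≤ α s := by linarith
    have hcos : Real.cos (α s) ≤ Real.cos (Real.pi - ε) :=
      Real.cos_le_cos_of_nonneg_of_le_pi (by linarith) h2 h1
    rw [Real.cos_pi_sub] at hcos
    have hcosε : 1 - ε^2/2 ≤ Real.cos ε := Real.one_sub_sq_div_two_le_cos
    have hsin0 : 0 ≤ Real.sin (α s) := Real.sin_nonneg_of_nonneg_of_le_pi hx0 h2
    have hsinub : Real.sin (α s) ≤ ε := by
      have h3 : Real.sin (α s) = Real.sin (Real.pi - α s) := (Real.sin_pi_sub _).symm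
      rw [h3]
      calc Real.sin (Real.pi - α s) ≤ Real.pi - α s := Real.sin_le (by linarith)
        _ ≤ ε := by linarith
    have hus : |u s| ≤ M := hMb s hs
    have h4 : -(M * ε) ≤ u s * Real.sin (α s) := by
      have h5 : |u s| * Real.sin (α s) ≤ M * ε := mul_le_mul hus hsinub hsin0 hM0
      have h6 : -(|u s| * Real.sin (α s)) ≤ u s * Real.sin (α s) := by
        have h7 : -|u s| ≤ u s := neg_abs_le (u s)
        nlinarith
      linarith
    have h8 : -g * Real.cos (α s) ≥ g * (1 - ε^2/2) := by
      have h9 : Real.cos (α s) ≤ -(1 - ε^2/2) := by linarith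
      nlinarith
    have h10 : ε * ε ≤ 1 * ε := mul_le_mul_of_nonneg_right hε1 hε0.le
    nlinarith
  by_cases hB : ∃ t ∈ Set.Icc (0:ℝ) 1, α t = Real.pi
  · -- the solution reaches π; take the first hitting time
    set B : Set ℝ := {t | t ∈ Set.Icc (0:ℝ) 1 ∧ α t = Real.pi} with hBdef
    have hBne : B.Nonempty := by obtain ⟨t, ht, h⟩ := hB; exact ⟨t, ht, h⟩
    have hBc : IsClosed B := by
      have hBeq : B = Set.Icc 0 1 ∩ α ⁻¹' {Real.pi} := by
        ext t; simp [hBdef]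
      rw [hBeq]
      exact isClosed_Icc.inter (isClosed_singleton.preimage hcont)
    have hBbdd : BddBelow B := ⟨0, fun t ht => ht.1.1⟩
    set t₁ := sInf B with ht₁def
    have ht₁B : t₁ ∈ B := hBc.csInf_mem hBne hBbdd
    have ht₁0 : 0 < t₁ := by
      rcases lt_or_eq_of_le ht₁B.1.1 with h | h
      · exact h
      · exfalso
        have h2 := ht₁B.2
        rw [← h, hα0] at h2
        exact absurd h2 (ne_of_lt hφ.2)
    have hless : ∀ s, 0 ≤ s → s < t₁ → α s < Real.pi := by
      intro s hs0 hst
      have hsne : α s ≠ Real.pi := fun h =>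
        absurd (csInf_le hBbdd ⟨⟨hs0, hst.le.trans ht₁B.1.2⟩, h⟩) (not_le.mpr hst)
      rcases lt_or_gt_of_ne hsne with h | h
      · exact h
      · exfalso
        have hmem : Real.pi ∈ Set.Icc (α 0) (α s) := ⟨by rw [hα0]; exact hφ.2.le, h.le⟩
        obtain ⟨r, hr, hαr⟩ := intermediate_value_Icc hs0 hcont.continuousOn hmem
        have : t₁ ≤ r := csInf_le hBbdd ⟨⟨hr.1, (hr.2.trans hst.le).trans ht₁B.1.2⟩, hαr⟩
        linarith [hr.2]
    have hup : ∀ s ∈ Set.Icc (0:ℝ) t₁, α s ≤ Real.pi := by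
      intro s hs
      rcases lt_or_eq_of_le hs.2 with h | h
      · exact (hless s hs.1 h).le
      · rw [h]; exact le_of_eq ht₁B.2
    have hstay := pendulum_stays α hα2 ε c t₁ φ hc0 ht₁0.le ht₁B.1.2 hφ.1 hα0 hα'0 hup hkey
    refine ⟨t₁, ht₁0, ht₁B.2, ?_⟩
    intro s hs
    refine ⟨?_, hless s hs.1 hs.2⟩
    have h1 := hstay s ⟨hs.1, hs.2.le⟩
    nlinarith [mul_nonneg hc0 (sq_nonneg s), hφ.1]
  · -- otherwise the solution stays below π forever on [0,1], contradicting growth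
    exfalso
    push_neg at hB
    have hup : ∀ s ∈ Set.Icc (0:ℝ) 1, α s ≤ Real.pi := by
      intro s hs
      by_contra hgt
      push_neg at hgt
      have hmem : Real.pi ∈ Set.Icc (α 0) (α s) := ⟨by rw [hα0]; exact hφ.2.le, hgt.le⟩
      obtain ⟨r, hr, hαr⟩ := intermediate_value_Icc hs.1 hcont.continuousOn hmem
      exact hB r ⟨hr.1, hr.2.trans hs.2⟩ hαr
    have hstay := pendulum_stays α hα2 ε c 1 φ hc0 zero_le_one le_rfl hφ.1 hα0 hα'0 hup hkey
    have h1 := hstay 1 ⟨zero_le_one, le_rfl⟩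
    have h2 := hup 1 ⟨zero_le_one, le_rfl⟩
    have h3 := hφ.1
    nlinarith
end
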